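/- arXiv:1608.06274 — 6 statements merged into one kernel-verified Lean document; each statement's English description precedes it below -/
import Mathlib

section
/- For every v ∈ ℤ⟨a,b⟩, the functional equation φ_t(v) = κ(v) + Σ_v φ(v₍₁₎)·b·λ_t(v₍₂₎) holds, where the sum is over the coproduct Δ(v) = Σ_v v₍₁₎ ⊗ v₍₂₎. -/
open scoped TensorProduct

noncomputable section

namespace CD


/-- ab-words: `false` represents the letter `a`, `true` represents the letter `b`. -/
abbrev Word := List Bool

/-- The free associative ℤ-algebra ℤ⟨a,b⟩ on two noncommuting variables. -/
abbrev ZAB := MonoidAlgebra ℤ (FreeMonoid Bool)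

/-- The ab-monomial associated to a word. -/
def mon (w : Word) : ZAB := MonoidAlgebra.single (FreeMonoid.ofList w) 1

/-- The variable `a`. -/
def genA : ZAB := mon [false]
/-- The variable `b`. -/
def genB : ZAB := mon [true]
/-- `c = a + b`. -/
def genC : ZAB := genA + genB
/-- `d = ab + ba`. -/
def genD : ZAB := genA * genB + genB * genA
/-- `a - b`. -/
def amb : ZAB := genA - genB

/-- Extend a function defined on ab-monomials to a ℤ-linear map on ℤ⟨a,b⟩. -/
def lin (f : Word → ZAB) : ZAB →ₗ[ℤ] ZAB :=
  Finsupp.lift ZAB ℤ (FreeMonoid Bool) (fun w => f (FreeMonoid.toList w)) ∘ₗ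
    (MonoidAlgebra.coeffLinearEquiv ℤ).toLinearMap

/-- κ : κ(aᵐ) = (a-b)ᵐ, and 0 on all other ab-monomials. -/
def kappaW (w : Word) : ZAB :=
  if ∀ x ∈ w, x = false then amb ^ w.length else 0

/-- β : β(bᵐ) = (a-b)ᵐ, and 0 on all other ab-monomials. -/
def betaW (w : Word) : ZAB :=
  if ∀ x ∈ w, x = true then amb ^ w.length else 0

/-- η : η(bᵐaᵏ) = 2·(a-b)^{m+k}, and 0 on all other ab-monomials. -/
def etaW (w : Word) : ZAB :=
  if List.IsChain (· ≥ ·) w then (2 : ℤ) • amb ^ w.length else 0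

/-- λ_t : λ_t(bᵐ) = (a-b)ᵐ, λ_t(bᵐa) = (a-b)^{m+1}, and 0 on all other ab-monomials. -/
def lamTW (w : Word) : ZAB :=
  if List.IsChain (· ≥ ·) w ∧ w.count false ≤ 1 then amb ^ w.length else 0

/-- λ_ub = η - 2·β. -/
def lamUbW (w : Word) : ZAB := etaW w - (2 : ℤ) • betaW w

/-- ω : first replace each occurrence of ab by 2d, then each remaining letter by c. -/
def omegaW : Word → ZAB
  | [] => 1
  | false :: true :: w => ((2 : ℤ) • genD) * omegaW w
  | _ :: w => genC * omegaW w

/-- H′ : removes the last letter of an ab-monomial (`H′(1) = 0`). -/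
def HpW (w : Word) : ZAB := if w = [] then 0 else mon w.dropLast

/-- r : r(1) = 0, r(v·a) = v, r(v·b) = 0. -/
def rW (w : Word) : ZAB := if w.getLast? = some false then mon w.dropLast else 0

/-- The reversal involution on ab-monomials. -/
def revW (w : Word) : ZAB := mon w.reverse

/-- `conv F G (w) = Σ_w F(w₍₁₎)·b·G(w₍₂₎)`, the sum over the coproduct of the word `w`,
i.e. over all ways of removing one letter from `w`, splitting it in two pieces. -/
def conv (F G : Word → ZAB) (w : Word) : ZAB :=
  ∑ i ∈ Finset.range w.length, F (w.take i) * genB * G (w.drop (i + 1))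

/-- `tailChain lam j (w) = Σ_w η(w₍₁₎)·b·η(w₍₂₎)·b ⋯ b·η(w₍ⱼ₎)·b·lam(w₍ⱼ₊₁₎)`:
a chain of `j` η's followed by the map `lam`, summed over the iterated coproduct. -/
def tailChain (lam : Word → ZAB) : ℕ → Word → ZAB
  | 0 => lam
  | j + 1 => conv etaW (tailChain lam j)

/-- φ_k : φ_1 = κ and, for k ≥ 2, `φ_k(v) = Σ_v κ(v₍₁₎)·b·η(v₍₂₎)·b ⋯ b·η(v₍ₖ₎)`,
the sum over the iterated coproduct Δ^{k-1}. -/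
def phiK : ℕ → Word → ZAB
  | 0 => fun _ => 0
  | 1 => kappaW
  | k + 2 => conv kappaW (tailChain etaW k)

/-- φ_{t,k} : φ_{t,1} = κ and, for k ≥ 2,
`φ_{t,k}(v) = Σ_v κ(v₍₁₎)·b·η(v₍₂₎)·b ⋯ b·η(v₍ₖ₋₁₎)·b·λ_t(v₍ₖ₎)`. -/
def phiTK : ℕ → Word → ZAB
  | 0 => fun _ => 0
  | 1 => kappaW
  | k + 2 => conv kappaW (tailChain lamTW k)

/-- φ_{ub,k} : φ_{ub,1} = κ and, for k ≥ 2,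
`φ_{ub,k}(v) = Σ_v κ(v₍₁₎)·b·η(v₍₂₎)·b ⋯ b·η(v₍ₖ₋₁₎)·b·λ_ub(v₍ₖ₎)`. -/
def phiUbK : ℕ → Word → ZAB
  | 0 => fun _ => 0
  | 1 => kappaW
  | k + 2 => conv kappaW (tailChain lamUbW k)

/-- φ = Σ_{k ≥ 1} φ_k (on a word of length ℓ, only terms with k ≤ ℓ + 1 are nonzero). -/
def phiW (w : Word) : ZAB := ∑ k ∈ Finset.range (w.length + 2), phiK k w

/-- φ_t = Σ_{k ≥ 1} φ_{t,k}. -/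
def phiTW (w : Word) : ZAB := ∑ k ∈ Finset.range (w.length + 2), phiTK k w

/-- φ_ub = Σ_{k ≥ 1} φ_{ub,k}. -/
def phiUbW (w : Word) : ZAB := ∑ k ∈ Finset.range (w.length + 2), phiUbK k w

/-- The coproduct Δ on ℤ⟨a,b⟩: Δ(u₁u₂⋯uₙ) = Σᵢ u₁⋯u_{i-1} ⊗ u_{i+1}⋯uₙ. -/
def Delta : ZAB →ₗ[ℤ] (ZAB ⊗[ℤ] ZAB) :=
  Finsupp.lift (ZAB ⊗[ℤ] ZAB) ℤ (FreeMonoid Bool)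
    (fun w => ∑ i ∈ Finset.range (FreeMonoid.toList w).length,
      mon ((FreeMonoid.toList w).take i) ⊗ₜ[ℤ] mon ((FreeMonoid.toList w).drop (i + 1))) ∘ₗ
    (MonoidAlgebra.coeffLinearEquiv ℤ).toLinearMap

/-- For linear maps F, G, the linear map `u ⊗ w ↦ F(u)·b·G(w)`; applying it to Δ(v)
gives the Sweedler sum `Σ_v F(v₍₁₎)·b·G(v₍₂₎)`. -/
def sandwich (F G : ZAB →ₗ[ℤ] ZAB) : (ZAB ⊗[ℤ] ZAB) →ₗ[ℤ] ZAB :=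
  TensorProduct.lift
    (((LinearMap.mul ℤ ZAB).comp ((LinearMap.mulRight ℤ genB).comp F)).compl₂ G)



/-! ### Auxiliary lemmas -/

lemma conv_nil (F G : Word → ZAB) : conv F G [] = 0 := by simp [conv]

lemma conv_cons (F G : Word → ZAB) (x : Bool) (w : Word) :
    conv F G (x :: w) = F [] * genB * G w + conv (fun u => F (x :: u)) G w := by
  rw [conv, List.length_cons, Finset.sum_range_succ']
  simp only [List.take_succ_cons, List.drop_succ_cons, List.take_zero, List.drop_zero]
  rw [add_comm]
  rfl

lemma conv_congr_right (F G G' : Word → ZAB) (h : ∀ u, G u = G' u) (w : Word) :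
    conv F G w = conv F G' w := by simp [conv, h]

lemma conv_congr_left (F F' G : Word → ZAB) (h : ∀ u, F u = F' u) (w : Word) :
    conv F G w = conv F' G w := by simp [conv, h]

lemma conv_mul_left (c : ZAB) (F G : Word → ZAB) (w : Word) :
    conv (fun u => c * F u) G w = c * conv F G w := by
  simp [conv, Finset.mul_sum, mul_assoc]

lemma conv_add_left (F F' G : Word → ZAB) (w : Word) :
    conv (fun u => F u + F' u) G w = conv F G w + conv F' G w := by
  simp [conv, add_mul, Finset.sum_add_distrib]

lemma conv_assoc (G H : Word → ZAB) :
    ∀ (w : Word) (F : Word → ZAB), conv (conv F G) H w = conv F (conv G H) w := by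
  intro w
  induction w with
  | nil => intro F; simp [conv_nil]
  | cons x w ih =>
      intro F
      rw [conv_cons, conv_cons, conv_nil, zero_mul, zero_mul, zero_add]
      have h1 : ∀ u, conv F G (x :: u) =
          F [] * genB * G u + conv (fun v => F (x :: v)) G u := fun u => conv_cons F G x u
      rw [conv_congr_left _ _ _ h1, conv_add_left, conv_mul_left, ih]

lemma tailChain_eq_zero (lam : Word → ZAB) :
    ∀ (j : ℕ) (w : Word), w.length < j → tailChain lam j w = 0 := by
  intro j
  induction j with
  | zero => intro w h; omega
  | succ j ih =>
      intro w h
      show conv etaW (tailChain lam j) w = 0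
      rw [conv]
      apply Finset.sum_eq_zero
      intro i hi
      rw [Finset.mem_range] at hi
      rw [ih _ (by simp only [List.length_drop]; omega), mul_zero]

lemma phiK_eq_zero (k : ℕ) (w : Word) (h : w.length + 2 ≤ k) : phiK k w = 0 := by
  obtain ⟨m, rfl⟩ : ∃ m, k = m + 2 := ⟨k - 2, by omega⟩
  show conv kappaW (tailChain etaW m) w = 0
  rw [conv]
  apply Finset.sum_eq_zero
  intro i hi
  rw [Finset.mem_range] at hi
  rw [tailChain_eq_zero _ _ _ (by simp only [List.length_drop]; omega), mul_zero]

lemma conv_tailChain (j : ℕ) (w : Word) :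
    conv (tailChain etaW j) lamTW w = tailChain lamTW (j + 1) w := by
  induction j generalizing w with
  | zero => rfl
  | succ j ih =>
      show conv (conv etaW (tailChain etaW j)) lamTW w = conv etaW (tailChain lamTW (j + 1)) w
      rw [conv_assoc]
      exact conv_congr_right _ _ _ (fun u => ih u) w

lemma conv_phiK (k : ℕ) (w : Word) :
    conv (phiK (k + 1)) lamTW w = phiTK (k + 2) w := by
  cases k with
  | zero => rfl
  | succ k =>
      show conv (conv kappaW (tailChain etaW k)) lamTW w
          = conv kappaW (tailChain lamTW (k + 1)) w
      rw [conv_assoc]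
      exact conv_congr_right _ _ _ (fun u => conv_tailChain k u) w

lemma phiTK_top_eq_zero (w : Word) : phiTK (w.length + 2) w = 0 := by
  show conv kappaW (tailChain lamTW w.length) w = 0
  rw [conv]
  apply Finset.sum_eq_zero
  intro i hi
  rw [Finset.mem_range] at hi
  rw [tailChain_eq_zero _ _ _ (by simp only [List.length_drop]; omega), mul_zero]

lemma key_word (w : Word) : phiTW w = kappaW w + conv phiW lamTW w := by
  have h1 : conv phiW lamTW w
      = ∑ k ∈ Finset.range (w.length + 2), conv (phiK k) lamTW w := by
    rw [conv]
    have hphi : ∀ i ∈ Finset.range w.length,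
        phiW (w.take i) * genB * lamTW (w.drop (i + 1))
        = ∑ k ∈ Finset.range (w.length + 2),
            phiK k (w.take i) * genB * lamTW (w.drop (i + 1)) := by
      intro i hi
      rw [Finset.mem_range] at hi
      have : phiW (w.take i) = ∑ k ∈ Finset.range (w.length + 2), phiK k (w.take i) := by
        rw [phiW]
        apply Finset.sum_subset
        · apply Finset.range_subset_range.2
          simp only [List.length_take]
          omega
        · intro k _ hk
          rw [Finset.mem_range, not_lt] at hk
          exact phiK_eq_zero _ _ hk
      rw [this, Finset.sum_mul, Finset.sum_mul]
    rw [Finset.sum_congr rfl hphi, Finset.sum_comm]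
    rfl
  rw [h1]
  have h2 : ∑ k ∈ Finset.range (w.length + 2), conv (phiK k) lamTW w
      = ∑ k ∈ Finset.range (w.length + 1), phiTK (k + 2) w := by
    rw [Finset.sum_range_succ']
    have h0 : conv (phiK 0) lamTW w = 0 := by
      simp [conv, phiK]
    rw [h0, add_zero]
    exact Finset.sum_congr rfl fun k _ => conv_phiK k w
  rw [h2, Finset.sum_range_succ, phiTK_top_eq_zero, add_zero, phiTW,
    Finset.sum_range_succ', Finset.sum_range_succ']
  have hT0 : phiTK 0 w = 0 := rfl
  have hT1 : phiTK 1 w = kappaW w := rfl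
  rw [hT0, hT1, add_zero, add_comm]

lemma lin_mon (f : Word → ZAB) (w : Word) : lin f (mon w) = f w := by
  rw [lin, mon, LinearMap.comp_apply]
  erw [Finsupp.lift_apply, Finsupp.sum_single_index] <;> simp

lemma Delta_mon (w : Word) :
    Delta (mon w) = ∑ i ∈ Finset.range w.length,
      mon (w.take i) ⊗ₜ[ℤ] mon (w.drop (i + 1)) := by
  rw [Delta, mon, LinearMap.comp_apply]
  erw [Finsupp.lift_apply, Finsupp.sum_single_index] <;> simp [mon]

lemma sandwich_tmul (F G : ZAB →ₗ[ℤ] ZAB) (x y : ZAB) :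
    sandwich F G (x ⊗ₜ[ℤ] y) = F x * genB * G y := by
  simp [sandwich]
  rfl

lemma main_mon (w : Word) :
    lin phiTW (mon w) = lin kappaW (mon w) + sandwich (lin phiW) (lin lamTW) (Delta (mon w)) := by
  rw [lin_mon, lin_mon, Delta_mon, map_sum, key_word]
  congr 1
  rw [conv]
  exact Finset.sum_congr rfl fun i _ => by rw [sandwich_tmul, lin_mon, lin_mon]

/-- the functional equation `φ_t(v) = κ(v) + Σ_v φ(v₍₁₎)·b·λ_t(v₍₂₎)`. -/
theorem phiT_functional_equation (v : ZAB) :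
    lin phiTW v = lin kappaW v + sandwich (lin phiW) (lin lamTW) (Delta v) := by
  induction v using MonoidAlgebra.induction_linear with
  | zero => simp
  | add x y hx hy =>
      simp only [map_add, hx, hy]
      abel
  | single a r =>
      have h : (MonoidAlgebra.single a r : ZAB) = r • mon (FreeMonoid.toList a) := by
        simp [mon, MonoidAlgebra.smul_single']
      rw [h, map_smul, map_smul, map_smul, map_smul, main_mon, smul_add]


end CD

end
end

section
/- Let v be an ab-monomial beginning with the letter a and let x be either a or b. Then 2·φ_t(v·a·x) = 2·κ(v·a·x) + ω(v·a·b). -/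
open scoped TensorProduct

noncomputable section

namespace CD


/-! ### Auxiliary lemmas -/

lemma mon_mul (u v : Word) : mon u * mon v = mon (u ++ v) := by
  simp [mon, MonoidAlgebra.single_mul_single]

lemma kappa_nil : kappaW [] = 1 := by simp [kappaW]
lemma kappa_a (t : Word) : kappaW (false :: t) = amb * kappaW t := by
  by_cases h : ∀ x ∈ t, x = false <;> simp [kappaW, h, pow_succ']
lemma kappa_b (t : Word) : kappaW (true :: t) = 0 := by simp [kappaW]

lemma eta_nil : etaW [] = (2:ℤ) • 1 := by simp [etaW]
lemma eta_b (t : Word) : etaW (true :: t) = amb * etaW t := by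
  have h : List.IsChain (· ≥ ·) (true :: t) ↔ List.IsChain (· ≥ ·) t := by
    rw [List.isChain_cons]; simp
  by_cases hc : List.IsChain (· ≥ ·) t <;>
    simp [etaW, h, hc, pow_succ', mul_smul_comm, two_mul, mul_add, add_mul]
lemma eta_a : etaW [false] = (2:ℤ) • amb := by simp [etaW]
lemma eta_aa (t : Word) : etaW (false :: false :: t) = amb * etaW (false :: t) := by
  have h : List.IsChain (· ≥ ·) (false :: false :: t) ↔ List.IsChain (· ≥ ·) (false :: t) := by
    rw [List.isChain_cons_cons]; simp
  by_cases hc : List.IsChain (· ≥ ·) (false :: t) <;>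
    simp [etaW, h, hc, pow_succ', mul_smul_comm, two_mul, mul_add, add_mul]
lemma eta_ab (t : Word) : etaW (false :: true :: t) = 0 := by
  rw [etaW, if_neg]; rw [List.isChain_cons_cons]; simp

lemma lam_nil : lamTW [] = 1 := by simp [lamTW]
lemma lam_a : lamTW [false] = amb := by simp [lamTW]
lemma lam_b (t : Word) : lamTW (true :: t) = amb * lamTW t := by
  have h : List.IsChain (· ≥ ·) (true :: t) ↔ List.IsChain (· ≥ ·) t := by
    rw [List.isChain_cons]; simp
  by_cases hc : List.IsChain (· ≥ ·) t ∧ t.count false ≤ 1 <;>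
    simp [lamTW, h, hc, List.count_cons, pow_succ', mul_smul_comm, two_mul, mul_add, add_mul]
lemma lam_a_cons (y : Bool) (t : Word) : lamTW (false :: y :: t) = 0 := by
  cases y
  · rw [lamTW, if_neg]; simp [List.count_cons]
  · rw [lamTW, if_neg]; rw [List.isChain_cons_cons]; simp

lemma lam_a_ne (t : Word) (h : t ≠ []) : lamTW (false :: t) = 0 := by
  cases t with
  | nil => exact absurd rfl h
  | cons y t' => exact lam_a_cons y t'

lemma conv_cons_s2 (F G : Word → ZAB) (y : Bool) (r : Word) :
    conv F G (y :: r) = F [] * genB * G r +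
      ∑ i ∈ Finset.range r.length, F (y :: r.take i) * genB * G (r.drop (i + 1)) := by
  rw [conv, List.length_cons, Finset.sum_range_succ']
  have h : ∀ i ∈ Finset.range r.length,
      F ((y :: r).take (i + 1)) * genB * G ((y :: r).drop (i + 1 + 1)) =
        F (y :: r.take i) * genB * G (r.drop (i + 1)) := by
    intro i _; simp
  rw [Finset.sum_congr rfl h]
  simp [add_comm]

lemma conv_kappa_a (G : Word → ZAB) (u : Word) :
    conv kappaW G (false :: u) = genB * G u + amb * conv kappaW G u := by
  rw [conv_cons_s2, kappa_nil, one_mul, conv, Finset.mul_sum]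
  congr 1
  refine Finset.sum_congr rfl fun i _ => ?_
  rw [kappa_a, mul_assoc, mul_assoc, mul_assoc]

lemma conv_kappa_b (G : Word → ZAB) (u : Word) :
    conv kappaW G (true :: u) = genB * G u := by
  rw [conv_cons_s2, kappa_nil, one_mul]
  have h : ∀ i ∈ Finset.range u.length,
      kappaW (true :: u.take i) * genB * G (u.drop (i + 1)) = 0 := by
    intro i _; rw [kappa_b, zero_mul, zero_mul]
  rw [Finset.sum_eq_zero h, add_zero]

lemma conv_eta_b (G : Word → ZAB) (u : Word) :
    conv etaW G (true :: u) = (2:ℤ) • (genB * G u) + amb * conv etaW G u := by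
  rw [conv_cons_s2, eta_nil, smul_mul_assoc, smul_mul_assoc, one_mul, conv, Finset.mul_sum]
  congr 1
  refine Finset.sum_congr rfl fun i _ => ?_
  rw [eta_b, mul_assoc, mul_assoc, mul_assoc]

lemma conv_eta_aa (G : Word → ZAB) (u : Word) :
    conv etaW G (false :: false :: u) =
      (2:ℤ) • (genB * G (false :: u)) + amb * conv etaW G (false :: u) := by
  rw [conv_cons_s2, eta_nil, smul_mul_assoc, smul_mul_assoc, one_mul]
  rw [conv_cons_s2, mul_add, List.length_cons, Finset.sum_range_succ', Finset.mul_sum]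
  congr 1
  have h : ∀ i ∈ Finset.range u.length,
      etaW (false :: (false :: u).take (i + 1)) * genB * G ((false :: u).drop (i + 1 + 1)) =
        amb * (etaW (false :: u.take i) * genB * G (u.drop (i + 1))) := by
    intro i _
    simp only [List.take_succ_cons, List.drop_succ_cons]
    rw [eta_aa, mul_assoc, mul_assoc, mul_assoc]
  rw [Finset.sum_congr rfl h, eta_nil]
  simp only [List.take_zero, List.drop_succ_cons, List.drop_zero]
  simp only [smul_mul_assoc, mul_smul_comm, one_mul, mul_assoc]
  rw [eta_a, smul_mul_assoc]
  abel

lemma conv_eta_ab (G : Word → ZAB) (u : Word) :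
    conv etaW G (false :: true :: u) =
      (2:ℤ) • (genB * G (true :: u)) + (2:ℤ) • (amb * (genB * G u)) := by
  rw [conv_cons_s2, eta_nil, smul_mul_assoc, smul_mul_assoc, one_mul]
  rw [List.length_cons, Finset.sum_range_succ']
  have h : ∀ i ∈ Finset.range u.length,
      etaW (false :: (true :: u).take (i + 1)) * genB * G ((true :: u).drop (i + 1 + 1)) = 0 := by
    intro i _
    simp only [List.take_succ_cons]
    rw [eta_ab, zero_mul, zero_mul]
  rw [Finset.sum_eq_zero h, zero_add]
  simp only [List.take_zero, List.drop_succ_cons, List.drop_zero]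
  rw [eta_a]
  simp only [smul_mul_assoc, mul_assoc]

lemma tailChain_zero (lam : Word → ZAB) : tailChain lam 0 = lam := rfl
lemma tailChain_succ (lam : Word → ZAB) (j : ℕ) :
    tailChain lam (j + 1) = conv etaW (tailChain lam j) := rfl

lemma tail_vanish (j : ℕ) : ∀ (w : Word), w.length < j → tailChain lamTW j w = 0 := by
  induction j with
  | zero => intro w h; omega
  | succ j ih =>
    intro w h
    rw [tailChain_succ, conv]
    refine Finset.sum_eq_zero fun i hi => ?_
    rw [ih _ (by rw [List.length_drop]; have := Finset.mem_range.1 hi; omega), mul_zero]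

/-- T = Σ_j tailChain λ_t j. -/
def TWf (w : Word) : ZAB := ∑ j ∈ Finset.range (w.length + 1), tailChain lamTW j w

lemma sum_tail_eq (w : Word) (N : ℕ) (h : w.length < N) :
    ∑ j ∈ Finset.range N, tailChain lamTW j w = TWf w := by
  rw [TWf]
  symm
  refine Finset.sum_subset (Finset.range_subset_range.2 (by omega)) fun j _ hj => ?_
  exact tail_vanish j w (by have := Finset.mem_range.not.1 hj; omega)

lemma sum_tail_shift (u : Word) (N : ℕ) (h : u.length < N + 1) :
    ∑ j ∈ Finset.range N, tailChain lamTW (j + 1) u = TWf u - lamTW u := by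
  have h2 := Finset.sum_range_succ' (fun j => tailChain lamTW j u) N
  rw [sum_tail_eq u (N + 1) h] at h2
  rw [eq_sub_iff_add_eq, h2, tailChain_zero]

lemma genC_mul (X : ZAB) : genC * X = (2:ℤ) • (genB * X) + amb * X := by
  have h : genC = (2:ℤ) • genB + amb := by
    simp only [genC, genB, genA, amb, two_smul]; abel
  rw [h, add_mul, smul_mul_assoc]

lemma genD_mul (X : ZAB) : genB * (genC * X) + amb * (genB * X) = genD * X := by
  rw [← mul_assoc, ← mul_assoc, ← add_mul]
  congr 1
  simp only [genB, genC, genD, genA, amb, mul_add, add_mul, sub_mul, mul_sub, mon_mul,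
    List.cons_append, List.nil_append]
  abel

lemma TWf_nil : TWf [] = 1 := by
  simp [TWf, tailChain_zero, lam_nil]

lemma TWf_b (u : Word) : TWf (true :: u) = genC * TWf u := by
  rw [TWf, List.length_cons, Finset.sum_range_succ']
  have h : ∀ j ∈ Finset.range (u.length + 1), tailChain lamTW (j + 1) (true :: u) =
      (2:ℤ) • (genB * tailChain lamTW j u) + amb * tailChain lamTW (j + 1) u := by
    intro j _
    rw [tailChain_succ, conv_eta_b, ← tailChain_succ]
  rw [Finset.sum_congr rfl h, Finset.sum_add_distrib, ← Finset.smul_sum, ← Finset.mul_sum,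
    ← Finset.mul_sum, sum_tail_shift u (u.length + 1) (by omega), tailChain_zero, lam_b,
    genC_mul, TWf, mul_sub]
  abel


lemma TWf_aaG (u : Word) : TWf (false :: false :: u) =
    genC * TWf (false :: u) - amb * lamTW (false :: u) := by
  rw [TWf, List.length_cons, List.length_cons, Finset.sum_range_succ']
  have h : ∀ j ∈ Finset.range (u.length + 1 + 1),
      tailChain lamTW (j + 1) (false :: false :: u) =
      (2:ℤ) • (genB * tailChain lamTW j (false :: u)) +
        amb * tailChain lamTW (j + 1) (false :: u) := by
    intro j _
    rw [tailChain_succ, conv_eta_aa, ← tailChain_succ]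
  rw [Finset.sum_congr rfl h, Finset.sum_add_distrib, ← Finset.smul_sum, ← Finset.mul_sum,
    ← Finset.mul_sum, sum_tail_eq (false :: u) (u.length + 2) (by simp),
    sum_tail_shift (false :: u) (u.length + 1 + 1) (by simp), tailChain_zero, lam_a_cons,
    genC_mul, mul_sub]
  abel

lemma TWf_ab (u : Word) : TWf (false :: true :: u) = ((2:ℤ) • genD) * TWf u := by
  rw [TWf, List.length_cons, List.length_cons, Finset.sum_range_succ']
  have h : ∀ j ∈ Finset.range (u.length + 1 + 1),
      tailChain lamTW (j + 1) (false :: true :: u) =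
      (2:ℤ) • (genB * tailChain lamTW j (true :: u)) +
        (2:ℤ) • (amb * (genB * tailChain lamTW j u)) := by
    intro j _
    rw [tailChain_succ, conv_eta_ab]
  rw [Finset.sum_congr rfl h, Finset.sum_add_distrib, ← Finset.smul_sum, ← Finset.smul_sum,
    ← Finset.mul_sum, ← Finset.mul_sum, ← Finset.mul_sum,
    sum_tail_eq (true :: u) (u.length + 2) (by simp),
    sum_tail_eq u (u.length + 2) (by omega), tailChain_zero, lam_a_cons, add_zero,
    TWf_b, smul_mul_assoc, ← smul_add, genD_mul]

lemma genC_eq : genC = (2:ℤ) • genB + amb := by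
  simp only [genC, genB, genA, amb, two_smul]; abel

lemma TWf_a : TWf [false] = genC := by
  rw [TWf]
  simp only [List.length_cons, List.length_nil]
  rw [Finset.sum_range_succ, Finset.sum_range_one, tailChain_zero, lam_a,
    tailChain_succ, conv_cons_s2]
  simp only [List.length_nil, Finset.sum_range_zero, add_zero, tailChain_zero]
  rw [eta_nil, lam_nil, smul_mul_assoc, smul_mul_assoc, one_mul, mul_one, genC_eq]
  abel

lemma phiT_eq (w : Word) : phiTW w = kappaW w + conv kappaW TWf w := by
  rw [phiTW, Finset.sum_range_succ', Finset.sum_range_succ']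
  have h0 : phiTK 0 w = 0 := rfl
  have h1 : phiTK (0 + 1) w = kappaW w := rfl
  rw [h0, h1, add_zero, add_comm]
  congr 1
  have h2 : ∀ k ∈ Finset.range w.length, phiTK (k + 1 + 1) w =
      ∑ i ∈ Finset.range w.length,
        kappaW (w.take i) * genB * tailChain lamTW k (w.drop (i + 1)) := by
    intro k _
    rw [show phiTK (k + 1 + 1) = conv kappaW (tailChain lamTW k) from rfl, conv]
  rw [Finset.sum_congr rfl h2, Finset.sum_comm, conv]
  refine Finset.sum_congr rfl fun i hi => ?_
  rw [← Finset.mul_sum,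
    sum_tail_eq _ w.length (by rw [List.length_drop]; have := Finset.mem_range.1 hi; omega)]

lemma phiT_nil : phiTW [] = 1 := by rw [phiT_eq, conv_nil, kappa_nil, add_zero]

lemma phi_a (r : Word) : phiTW (false :: r) = amb * phiTW r + genB * TWf r := by
  rw [phiT_eq, phiT_eq, kappa_a, conv_kappa_a, mul_add]
  abel

lemma phi_b (r : Word) : phiTW (true :: r) = genB * TWf r := by
  rw [phiT_eq, kappa_b, conv_kappa_b, zero_add]

lemma omega_nil : omegaW [] = 1 := rfl
lemma omega_b (t : Word) : omegaW (true :: t) = genC * omegaW t := rfl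
lemma omega_ab (t : Word) : omegaW (false :: true :: t) = ((2:ℤ) • genD) * omegaW t := rfl
lemma omega_aa (t : Word) : omegaW (false :: false :: t) = genC * omegaW (false :: t) := rfl
lemma omega_a_nil : omegaW [false] = genC * omegaW [] := rfl

lemma cc_sub_ee : genC * genC - amb * amb = ((2:ℤ) • genD) * 1 := by
  simp only [genC, genD, genB, genA, amb, mul_add, add_mul, sub_mul, mul_sub, mon_mul,
    List.cons_append, List.nil_append, mul_one, smul_add, two_smul]
  abel

theorem TWf_omega : ∀ (s : Word) (x : Bool),
    TWf (s ++ [false, x]) = omegaW (s ++ [false, true])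
  | [], false => by
    simp only [List.nil_append]
    rw [show ([false, false] : Word) = false :: false :: ([] : Word) from rfl, TWf_aaG,
      TWf_a, lam_a, omega_ab, omega_nil, cc_sub_ee]
  | [], true => by
    simp only [List.nil_append]
    rw [show ([false, true] : Word) = false :: true :: ([] : Word) from rfl, TWf_ab,
      TWf_nil, omega_ab, omega_nil]
  | true :: s', x => by
    simp only [List.cons_append]
    rw [TWf_b, omega_b, TWf_omega s' x]
  | [false], x => by
    simp only [List.cons_append, List.nil_append]
    rw [TWf_aaG, lam_a_cons, mul_zero, sub_zero, omega_aa,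
      show (false :: [x] : Word) = [] ++ [false, x] from rfl,
      show (false :: [true] : Word) = [] ++ [false, true] from rfl, TWf_omega [] x]
  | false :: true :: s'', x => by
    simp only [List.cons_append]
    rw [TWf_ab, omega_ab, TWf_omega s'' x]
  | false :: false :: s'', x => by
    simp only [List.cons_append]
    rw [TWf_aaG, lam_a_ne _ (by simp), mul_zero, sub_zero, omega_aa]
    rw [show (false :: (s'' ++ [false, x]) : Word) = (false :: s'') ++ [false, x] from rfl,
      show (false :: (s'' ++ [false, true]) : Word) = (false :: s'') ++ [false, true] from rfl,
      TWf_omega (false :: s'') x]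
termination_by s _ => s.length


/-- for an ab-monomial `v` beginning with `a` and a letter `x`,
`2·φ_t(v·a·x) = 2·κ(v·a·x) + ω(v·a·b)`. -/
theorem two_phiT_ax (w : Word) (x : Bool) :
    (2 : ℤ) • phiTW ((false :: w) ++ [false, x]) =
      (2 : ℤ) • kappaW ((false :: w) ++ [false, x]) +
        omegaW ((false :: w) ++ [false, true]) := by
  have key : ∀ X : ZAB, (2:ℤ) • (amb * (genB * X) + genB * (genC * X)) = ((2:ℤ) • genD) * X := by
    intro X
    rw [add_comm, genD_mul, smul_mul_assoc]
  induction w with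
  | nil =>
    simp only [List.cons_append, List.nil_append]
    have h2 : TWf [false, x] = omegaW [false, true] := by simpa using TWf_omega [] x
    cases x with
    | false =>
      rw [phi_a, phi_a, phi_a, phiT_nil, TWf_nil, TWf_a, h2,
        kappa_a, kappa_a, kappa_a, kappa_nil, omega_aa, omega_ab, omega_nil]
      simp only [genC, genD, genA, genB, amb, mul_one, one_mul, mul_add, add_mul, sub_mul,
        mul_sub, mon_mul, List.cons_append, List.nil_append, smul_add, smul_sub,
        mul_smul_comm, smul_mul_assoc, smul_smul]
      abel
    | true =>
      rw [phi_a, phi_a, phi_b, TWf_nil, TWf_b, TWf_nil, h2,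
        kappa_a, kappa_a, kappa_b, omega_aa, omega_ab, omega_nil]
      simp only [genC, genD, genA, genB, amb, mul_one, one_mul, mul_zero, mul_add, add_mul,
        sub_mul, mul_sub, mon_mul, List.cons_append, List.nil_append, smul_add, smul_sub,
        smul_zero, mul_smul_comm, smul_mul_assoc, smul_smul]
      abel
  | cons y w' ih =>
    cases y with
    | true =>
      simp only [List.cons_append]
      have hT : TWf (w' ++ [false, x]) = omegaW (w' ++ [false, true]) := TWf_omega w' x
      rw [phi_a, phi_b, TWf_b, hT, kappa_a, kappa_b, mul_zero, omega_ab, key, smul_zero,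
        zero_add]
    | false =>
      simp only [List.cons_append] at ih ⊢
      have hT : TWf (false :: (w' ++ [false, x])) = omegaW (false :: (w' ++ [false, true])) := by
        simpa using TWf_omega (false :: w') x
      rw [phi_a, hT, kappa_a, omega_aa, smul_add, ← mul_smul_comm, ih, mul_add,
        mul_smul_comm, genC_mul]
      abel


end CD

end
end

section
/- For every ab-monomial v, φ_ub(v·a) = φ(v)·(a − b). -/
open scoped TensorProduct

noncomputable section

namespace CD


lemma kappa_append_a (u : Word) : kappaW (u ++ [false]) = kappaW u * amb := by
  unfold kappaW
  by_cases h : ∀ x ∈ u, x = false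
  · rw [if_pos, if_pos h, List.length_append, List.length_singleton, pow_succ]
    intro x hx
    rcases List.mem_append.1 hx with h1 | h1
    · exact h x h1
    · simpa using h1
  · rw [if_neg, if_neg h, zero_mul]
    intro hh
    exact h fun x hx => hh x (List.mem_append.2 (Or.inl hx))

lemma chain_append_a (u : Word) :
    List.IsChain (· ≥ ·) (u ++ [false]) ↔ List.IsChain (· ≥ ·) u := by
  rw [List.isChain_append]
  simp [Bool.false_le]

lemma eta_append_a (u : Word) : etaW (u ++ [false]) = etaW u * amb := by
  unfold etaW
  by_cases h : List.IsChain (· ≥ ·) u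
  · rw [if_pos ((chain_append_a u).2 h), if_pos h, List.length_append,
      List.length_singleton, pow_succ, smul_mul_assoc]
  · rw [if_neg (fun hh => h ((chain_append_a u).1 hh)), if_neg h, zero_mul]

lemma beta_append_a (u : Word) : betaW (u ++ [false]) = 0 := by
  unfold betaW
  rw [if_neg]
  intro h
  simpa using h false (List.mem_append.2 (Or.inr (List.mem_singleton.2 rfl)))

lemma lamUb_append_a (u : Word) : lamUbW (u ++ [false]) = etaW u * amb := by
  unfold lamUbW
  rw [beta_append_a, eta_append_a, smul_zero, sub_zero]

lemma lamUb_nil : lamUbW [] = 0 := by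
  unfold lamUbW etaW betaW
  simp

lemma tailChain_lamUb_nil (j : ℕ) : tailChain lamUbW j [] = 0 := by
  cases j with
  | zero => exact lamUb_nil
  | succ j => simp [tailChain, conv]

lemma conv_append (F G : Word → ZAB) (u : Word) (x : Bool) :
    conv F G (u ++ [x]) =
      (∑ i ∈ Finset.range u.length, F (u.take i) * genB * G (u.drop (i + 1) ++ [x]))
      + F u * genB * G [] := by
  unfold conv
  rw [List.length_append, List.length_singleton, Finset.sum_range_succ]
  congr 1
  · apply Finset.sum_congr rfl
    intro i hi
    rw [Finset.mem_range] at hi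
    rw [List.take_append_of_le_length (le_of_lt hi),
      List.drop_append_of_le_length hi]
  · have h : List.drop (u.length + 1) (u ++ [x]) = [] :=
      List.drop_eq_nil_of_le (by simp)
    rw [List.take_left, h]

lemma tailChain_lamUb_append_a (j : ℕ) (u : Word) :
    tailChain lamUbW j (u ++ [false]) = tailChain etaW j u * amb := by
  induction j generalizing u with
  | zero => exact lamUb_append_a u
  | succ j ih =>
    show conv etaW (tailChain lamUbW j) (u ++ [false]) = conv etaW (tailChain etaW j) u * amb
    rw [conv_append, tailChain_lamUb_nil, mul_zero, add_zero, conv, Finset.sum_mul]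
    apply Finset.sum_congr rfl
    intro i _
    rw [ih, mul_assoc, mul_assoc, mul_assoc]

lemma tailChain_eta_zero (j : ℕ) : ∀ u : Word, u.length < j → tailChain etaW j u = 0 := by
  induction j with
  | zero => intro u h; omega
  | succ j ih =>
    intro u h
    show conv etaW (tailChain etaW j) u = 0
    unfold conv
    apply Finset.sum_eq_zero
    intro i hi
    rw [Finset.mem_range] at hi
    rw [ih (u.drop (i + 1)) (by rw [List.length_drop]; omega), mul_zero]

lemma phiUbK_append_a (k : ℕ) (u : Word) :
    phiUbK k (u ++ [false]) = phiK k u * amb := by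
  match k with
  | 0 => show (0 : ZAB) = 0 * amb; rw [zero_mul]
  | 1 => exact kappa_append_a u
  | j + 2 =>
    show conv kappaW (tailChain lamUbW j) (u ++ [false])
        = conv kappaW (tailChain etaW j) u * amb
    rw [conv_append, tailChain_lamUb_nil, mul_zero, add_zero, conv, Finset.sum_mul]
    apply Finset.sum_congr rfl
    intro i _
    rw [tailChain_lamUb_append_a, mul_assoc, mul_assoc, mul_assoc]

lemma phiK_top_zero (u : Word) : phiK (u.length + 2) u = 0 := by
  show conv kappaW (tailChain etaW u.length) u = 0
  unfold conv
  apply Finset.sum_eq_zero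
  intro i hi
  rw [Finset.mem_range] at hi
  rw [tailChain_eta_zero u.length (u.drop (i + 1)) (by rw [List.length_drop]; omega), mul_zero]

/-- for every ab-monomial `v`, `φ_ub(v·a) = φ(v)·(a-b)`. -/
theorem phiUb_a (w : Word) :
    phiUbW (w ++ [false]) = phiW w * amb := by
  unfold phiUbW phiW
  rw [List.length_append, List.length_singleton]
  have : w.length + 1 + 2 = (w.length + 2) + 1 := by ring
  rw [this, Finset.sum_range_succ, Finset.sum_mul, phiUbK_append_a, phiK_top_zero, zero_mul,
    add_zero]
  exact Finset.sum_congr rfl fun k _ => phiUbK_append_a k w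


end CD

end
end

section
/- For every ab-monomial v, φ_ub(v·b·b) = φ_ub(v·b)·(a − b). -/
open scoped TensorProduct

noncomputable section

namespace CD


lemma chain_append_true_all (u : Word) (hc : List.IsChain (· ≥ ·) (u ++ [true])) :
    ∀ x ∈ u, x = true := by
  induction u with
  | nil => simp
  | cons y t ih =>
    rw [List.cons_append, List.isChain_cons] at hc
    obtain ⟨hhead, htail⟩ := hc
    intro x hx
    rcases List.mem_cons.mp hx with rfl | hx
    · cases t with
      | nil =>
        have := hhead true (by simp)
        cases x <;> simp_all <;> exact absurd this (by decide)
      | cons z t' =>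
        have hz : z = true := ih htail z (by simp)
        have := hhead z (by simp)
        subst hz; cases x <;> simp_all <;> exact absurd this (by decide)
    · exact ih htail x hx

lemma all_true_chain (u : Word) (h : ∀ x ∈ u, x = true) :
    List.IsChain (· ≥ ·) (u ++ [true]) := by
  induction u with
  | nil => simp
  | cons y t ih =>
    rw [List.cons_append, List.isChain_cons]
    refine ⟨?_, ih fun x hx => h x (by simp [hx])⟩
    intro b hb
    have hy : y = true := h y (by simp)
    subst hy
    cases b <;> simp

lemma lamUb_append_true (u : Word) : lamUbW (u ++ [true]) = 0 := by
  unfold lamUbW etaW betaW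
  by_cases h : ∀ x ∈ u ++ [true], x = true
  · rw [if_pos, if_pos h]
    · simp [two_smul]
    · exact all_true_chain u fun x hx => h x (by simp [hx])
  · rw [if_neg, if_neg h]
    · simp
    · intro hc
      exact h fun x hx => by
        rcases List.mem_append.mp hx with hx | hx
        · exact chain_append_true_all u hc x hx
        · simpa using hx

lemma kappa_append_true (u : Word) : kappaW (u ++ [true]) = 0 := by
  unfold kappaW
  rw [if_neg]
  intro h
  have := h true (by simp)
  simp at this

lemma conv_append_true (F G : Word → ZAB) (h0 : G [] = 0)
    (h : ∀ u : Word, G (u ++ [true]) = 0) (u : Word) :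
    conv F G (u ++ [true]) = 0 := by
  unfold conv
  apply Finset.sum_eq_zero
  intro i hi
  simp only [List.length_append, List.length_singleton, Finset.mem_range] at hi
  rcases Nat.lt_or_ge i u.length with h1 | h1
  · have hd : (u ++ [true]).drop (i + 1) = u.drop (i + 1) ++ [true] := by
      rw [List.drop_append]
      have : i + 1 - u.length = 0 := by omega
      rw [this]; rfl
    rw [hd, h, mul_zero]
  · have hi' : i = u.length := by omega
    subst hi'
    have hd : (u ++ [true]).drop (u.length + 1) = [] := by
      rw [List.drop_append]
      simp
    rw [hd, h0, mul_zero]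

lemma tailChain_nil : ∀ j, tailChain lamUbW j [] = 0
  | 0 => lamUb_nil
  | j + 1 => by
    show conv etaW (tailChain lamUbW j) [] = 0
    unfold conv
    simp

lemma tailChain_append_true : ∀ j u, tailChain lamUbW j (u ++ [true]) = 0
  | 0, u => lamUb_append_true u
  | j + 1, u =>
    conv_append_true etaW _ (tailChain_nil j) (fun v => tailChain_append_true j v) u

lemma phiUbK_append_true (k : ℕ) (u : Word) : phiUbK k (u ++ [true]) = 0 := by
  match k with
  | 0 => rfl
  | 1 => exact kappa_append_true u
  | k + 2 =>
    exact conv_append_true kappaW _ (tailChain_nil k) (fun v => tailChain_append_true k v) u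

lemma phiUbW_append_true (u : Word) : phiUbW (u ++ [true]) = 0 :=
  Finset.sum_eq_zero fun k _ => phiUbK_append_true k u

/-- for every ab-monomial `v`, `φ_ub(v·b·b) = φ_ub(v·b)·(a-b)`. -/
theorem phiUb_bb (w : Word) :
    phiUbW (w ++ [true, true]) = phiUbW (w ++ [true]) * amb := by
  have h1 : w ++ [true, true] = (w ++ [true]) ++ [true] := by simp
  rw [h1, phiUbW_append_true, phiUbW_append_true, zero_mul]


end CD

end
end

section
/- Let n ≥ 0, let P and P′ be graded posets of rank n+2, and let π : P → P′ be an order-preserving and rank-preserving surjection with π(0̂) = 0̂ and π(1̂) = 1̂. Assume that every chain c = {0̂ = x₀ < x₁ < ⋯ < x_k = 1̂} in P′ with k ≥ 2 has exactly two elementwise preimage chains in P, i.e., exactly two chains {0̂ = y₀ < y₁ < ⋯ < y_k = 1̂} in P with π(yᵢ) = xᵢ for all i. Then Ψ(P) = 2·Ψ(P′) − (a − b)^{n+1}; equivalently, Ψ(P′) = (Ψ(P) + (a − b)^{n+1})/2. -/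
open scoped TensorProduct

noncomputable section

namespace CD


/-- A graded poset: a finite bounded poset with a rank function `rk` such that
`rk ⊥ = 0` and `rk y = rk x + 1` whenever `y` covers `x`. -/
structure GrPoset where
  α : Type
  [fin : Fintype α]
  [deq : DecidableEq α]
  [po : PartialOrder α]
  [bo : BoundedOrder α]
  rk : α → ℕ
  rk_bot : rk ⊥ = 0
  rk_cov : ∀ {x y : α}, x ⋖ y → rk y = rk x + 1

attribute [instance] GrPoset.fin GrPoset.deq GrPoset.po GrPoset.bo

namespace GrPoset

/-- The rank of a graded poset is the rank of its maximal element. -/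
def rank (P : GrPoset) : ℕ := P.rk ⊤

theorem rk_lt (P : GrPoset) : ∀ y x : P.α, x < y → P.rk x < P.rk y := by
  classical
  intro y
  induction y using WellFoundedLT.induction with
  | _ y IH =>
    intro x hxy
    obtain ⟨z, hzM⟩ :=
      Finset.exists_maximal (s := Finset.univ.filter fun z => x ≤ z ∧ z < y)
        ⟨x, by simp [hxy]⟩
    have hz := hzM.1
    have hzmax : ∀ u ∈ (Finset.univ.filter fun z => x ≤ z ∧ z < y), ¬ z < u :=
      fun u hu hzu => lt_irrefl _ (lt_of_lt_of_le hzu (hzM.2 hu hzu.le))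
    simp only [Finset.mem_filter, Finset.mem_univ, true_and] at hz
    have hcov : z ⋖ y := by
      refine ⟨hz.2, fun u hzu huy => ?_⟩
      exact hzmax u (by simp [le_trans hz.1 hzu.le, huy]) hzu
    have hrk := P.rk_cov hcov
    rcases eq_or_lt_of_le hz.1 with rfl | h
    · omega
    · have := IH z hz.2 x h
      omega

theorem rk_mono (P : GrPoset) {x y : P.α} (h : x ≤ y) : P.rk x ≤ P.rk y := by
  rcases eq_or_lt_of_le h with rfl | h
  · exact le_rfl
  · exact (P.rk_lt y x h).le

open Classical in
/-- The Möbius function of a graded poset. -/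
def mu (P : GrPoset) (x y : P.α) : ℤ :=
  if x = y then 1
  else if x ≤ y then
    - ∑ z ∈ (Finset.univ.filter fun z => x ≤ z ∧ z < y).attach, P.mu x z.1
  else 0
termination_by P.rk y
decreasing_by
  · have hz := z.2
    simp only [Finset.mem_filter, Finset.mem_univ, true_and] at hz
    exact P.rk_lt y z.1 hz.2

/-- The Zaslavsky invariant `Z(P) = Σ_x (-1)^{ρ(x)} μ(0̂, x)`. -/
def Z (P : GrPoset) : ℤ := ∑ x : P.α, (-1) ^ (P.rk x) * P.mu ⊥ x

/-- The bounded Zaslavsky invariant `Z_b(P) = (-1)^{ρ(P)} μ(0̂, 1̂)`. -/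
def Zb (P : GrPoset) : ℤ := (-1) ^ P.rank * P.mu ⊥ ⊤

open Classical in
/-- The toric Zaslavsky invariant `Z_t(P) = (-1)^{ρ(P)-1} Σ_{x coatom} μ(0̂, x)`. -/
def Zt (P : GrPoset) : ℤ :=
  (-1) ^ (P.rank - 1) * ∑ x ∈ Finset.univ.filter (fun x : P.α => x ⋖ ⊤), P.mu ⊥ x

/-- The unbounded Zaslavsky invariant `Z_ub = Z - 2·Z_b`. -/
def Zub (P : GrPoset) : ℤ := P.Z - 2 * P.Zb

open Classical in
/-- Interior chains: chains in `P` avoiding `⊥` and `⊤`; these correspond to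
the chains `{0̂ = x₀ < x₁ < ⋯ < x_k = 1̂}` of `P` (by adjoining the endpoints). -/
def intChains (P : GrPoset) : Finset (Finset P.α) :=
  Finset.univ.filter fun Cs => IsChain (· ≤ ·) (Cs : Set P.α) ∧ ⊥ ∉ Cs ∧ ⊤ ∉ Cs

/-- The weight of a chain, computed from the sorted list of the ranks of its
interior elements: `wt = (a-b)^{r₁-1}·b·(a-b)^{r₂-r₁-1}·b ⋯ b·(a-b)^{N-r_{k-1}-1}`. -/
def wtAux (N : ℕ) : ℕ → List ℕ → ZAB
  | r, [] => amb ^ (N - r - 1)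
  | r, s :: t => amb ^ (s - r - 1) * genB * wtAux N s t

/-- The weight of an interior chain. -/
def wt (P : GrPoset) (Cs : Finset P.α) : ZAB :=
  wtAux P.rank 0 ((Cs.image P.rk).sort (· ≤ ·))

/-- The ab-index `Ψ(P) = Σ_c wt(c)`, the sum over all chains of `P` from `0̂` to `1̂`. -/
def psi (P : GrPoset) : ZAB := ∑ Cs ∈ P.intChains, P.wt Cs

/-- The one-element graded poset (used as a junk value). -/
def pt : GrPoset where
  α := Fin 1
  rk := fun _ => 0
  rk_bot := rfl
  rk_cov := fun {x y} h => absurd (Subsingleton.elim x y ▸ h.1) (lt_irrefl y)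

open Classical in
/-- The interval `[x, y]` of a graded poset, as a graded poset with rank function
`z ↦ ρ(z) - ρ(x)` (junk value if `¬ x ≤ y`). -/
def subIcc (P : GrPoset) (x y : P.α) : GrPoset :=
  if hxy : x ≤ y then
    { α := {z : P.α // z ∈ Set.Icc x y}
      fin := Fintype.ofFinite _
      deq := inferInstance
      po := inferInstance
      bo :=
        { top := ⟨y, ⟨hxy, le_refl y⟩⟩
          le_top := fun z => z.2.2
          bot := ⟨x, ⟨le_refl x, hxy⟩⟩
          bot_le := fun z => z.2.1 }
      rk := fun z => P.rk z.1 - P.rk x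
      rk_bot := Nat.sub_self _
      rk_cov := by
        intro z w h
        show P.rk w.1 - P.rk x = (P.rk z.1 - P.rk x) + 1
        have hcov : z.1 ⋖ w.1 :=
          ⟨h.1, fun u hzu huw => by
            have hu : u ∈ Set.Icc x y :=
              Set.mem_Icc.mpr ⟨le_trans z.2.1 hzu.le, le_trans huw.le w.2.2⟩
            exact h.2 (show z < ⟨u, hu⟩ from hzu) (show (⟨u, hu⟩ : _) < w from huw)⟩
        have h1 := P.rk_cov hcov
        have h2 := P.rk_mono z.2.1
        omega }
  else pt


/-- The graded poset obtained by adjoining a new minimum element below the old minimum;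
all ranks of old elements increase by 1. -/
def addZero (P : GrPoset) : GrPoset where
  α := WithBot P.α
  fin := inferInstanceAs (Fintype (Option P.α))
  deq := inferInstance
  po := inferInstance
  bo := { toOrderTop := inferInstance, toOrderBot := inferInstance }
  rk := fun z => match z with | ⊥ => 0 | (w : P.α) => P.rk w + 1
  rk_bot := rfl
  rk_cov := by
    intro x y h
    match x, y with
    | ⊥, ⊥ => exact absurd h.1 (lt_irrefl _)
    | ⊥, (w : P.α) =>
      have hw : w = (⊥ : P.α) := by
        by_contra hne
        exact h.2 (WithBot.bot_lt_coe (⊥ : P.α))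
          (WithBot.coe_lt_coe.mpr (Ne.bot_lt' (Ne.symm hne)))
      subst hw
      simp [P.rk_bot]
    | (z : P.α), ⊥ => exact absurd h.1 (by simp)
    | (z : P.α), (w : P.α) =>
      have hcov : z ⋖ w := by
        refine ⟨WithBot.coe_lt_coe.mp h.1, fun u hzu huw => ?_⟩
        exact h.2 (WithBot.coe_lt_coe.mpr hzu) (WithBot.coe_lt_coe.mpr huw)
      have := P.rk_cov hcov
      simp [this]

open Classical in
/-- The graded poset obtained by deleting all coatoms; all remaining elements other than
`⊤` retain their rank, while `⊤` gets rank one less than before. -/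
def delCoatoms (P : GrPoset) (hP : 2 ≤ P.rank) : GrPoset where
  α := {z : P.α // ¬ z ⋖ ⊤}
  fin := Fintype.ofFinite _
  deq := inferInstance
  po := inferInstance
  bo :=
    { top := ⟨⊤, fun h => absurd h.1 (lt_irrefl _)⟩
      le_top := fun z => le_top (a := z.1)
      bot := ⟨⊥, fun h => by
        have h1 := P.rk_cov h
        rw [P.rk_bot] at h1
        rw [GrPoset.rank] at hP
        omega⟩
      bot_le := fun z => bot_le (a := z.1) }
  rk := fun z => if z.1 = ⊤ then P.rank - 1 else P.rk z.1
  rk_bot := by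
    have hbt : (⊥ : P.α) ≠ ⊤ := by
      intro hbt
      have := P.rk_bot
      rw [hbt] at this
      rw [GrPoset.rank] at hP
      omega
    exact (if_neg hbt).trans P.rk_bot
  rk_cov := by
    intro z w h
    have hzw : z.1 < w.1 := h.1
    have hzt : z.1 ≠ ⊤ := fun hz =>
      absurd (lt_of_lt_of_le (hz ▸ hzw) le_top) (lt_irrefl _)
    show (if w.1 = ⊤ then P.rank - 1 else P.rk w.1)
        = (if z.1 = ⊤ then P.rank - 1 else P.rk z.1) + 1
    by_cases hwt : w.1 = ⊤
    · rw [if_pos hwt, if_neg hzt]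
      obtain ⟨u, huM⟩ :=
        Finset.exists_minimal (s := Finset.univ.filter fun u => z.1 < u)
          ⟨w.1, by simp [hzw]⟩
      have hu := huM.1
      have humin : ∀ v ∈ (Finset.univ.filter fun u => z.1 < u), ¬ v < u :=
        fun v hv hvu => lt_irrefl _ (lt_of_lt_of_le hvu (huM.2 hv hvu.le))
      simp only [Finset.mem_filter, Finset.mem_univ, true_and] at hu
      have hcov : z.1 ⋖ u := ⟨hu, fun v hzv hvu => humin v (by simp [hzv]) hvu⟩
      have hut : u ≠ ⊤ := fun he => z.2 (he ▸ hcov)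
      have hu2 : u ⋖ ⊤ := by
        by_contra hnc
        exact h.2 (show z < (⟨u, hnc⟩ : {z : P.α // ¬ z ⋖ ⊤}) from hu)
          (show (⟨u, hnc⟩ : {z : P.α // ¬ z ⋖ ⊤}) < w from by
            show u < w.1
            rw [hwt]
            exact lt_of_le_of_ne le_top hut)
      have h1 := P.rk_cov hcov
      have h2 : P.rank = P.rk u + 1 := P.rk_cov hu2
      omega
    · have hwlt : w.1 < ⊤ := lt_of_le_of_ne le_top hwt
      have hcov : z.1 ⋖ w.1 := by
        refine ⟨hzw, fun u hzu huw => ?_⟩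
        have hnc : ¬ u ⋖ ⊤ := fun hc => hc.2 huw hwlt
        exact h.2 (show z < (⟨u, hnc⟩ : {z : P.α // ¬ z ⋖ ⊤}) from hzu)
          (show (⟨u, hnc⟩ : {z : P.α // ¬ z ⋖ ⊤}) < w from huw)
      rw [if_neg hzt, if_neg hwt]
      exact P.rk_cov hcov



open Classical in
/-- The flag f-vector entry `f_S(P)`: the number of chains of `P` whose set of
interior ranks is exactly `S`. -/
def fS (P : GrPoset) (S : Finset ℕ) : ℤ :=
  (((P.intChains).filter fun Cs => Cs.image P.rk = S).card : ℤ)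

/-- The flag h-vector entry `h_S(P) = Σ_{T ⊆ S} (-1)^{|S∖T|}·f_T(P)`. -/
def hS (P : GrPoset) (S : Finset ℕ) : ℤ :=
  ∑ T ∈ S.powerset, (-1) ^ ((S \ T).card) * P.fS T

end GrPoset


section Aux

namespace GrPoset

variable (Q : GrPoset)

theorem eq_bot_of_rk_eq_zero {x : Q.α} (h : Q.rk x = 0) : x = ⊥ := by
  by_contra hne
  have h2 := Q.rk_lt x ⊥ (Ne.bot_lt hne)
  rw [Q.rk_bot] at h2
  omega

theorem eq_top_of_rk_eq_rank {x : Q.α} (h : Q.rk x = Q.rank) : x = ⊤ := by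
  by_contra hne
  have h2 := Q.rk_lt ⊤ x (lt_of_le_of_ne le_top hne)
  unfold GrPoset.rank at h
  omega

/-- An injective `ℕ`-valued key whose order refines the rank order. -/
def key (z : Q.α) : ℕ :=
  Fintype.card Q.α * Q.rk z + ((Fintype.equivFin Q.α) z : ℕ)

theorem key_injective : Function.Injective Q.key := by
  intro x y h
  have hx : ((Fintype.equivFin Q.α) x : ℕ) < Fintype.card Q.α := ((Fintype.equivFin Q.α) x).2
  have hy : ((Fintype.equivFin Q.α) y : ℕ) < Fintype.card Q.α := ((Fintype.equivFin Q.α) y).2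
  have h2 : ((Fintype.equivFin Q.α) x : ℕ) = ((Fintype.equivFin Q.α) y : ℕ) := by
    have h3 := congrArg (· % Fintype.card Q.α) h
    simpa [GrPoset.key, Nat.mul_add_mod, Nat.mod_eq_of_lt hx, Nat.mod_eq_of_lt hy] using h3
  exact (Fintype.equivFin Q.α).injective (Fin.ext h2)

theorem key_lt_of_rk_lt {x y : Q.α} (h : Q.rk x < Q.rk y) : Q.key x < Q.key y := by
  have hx : ((Fintype.equivFin Q.α) x : ℕ) < Fintype.card Q.α := ((Fintype.equivFin Q.α) x).2
  have h1 : Fintype.card Q.α * Q.rk x + ((Fintype.equivFin Q.α) x : ℕ)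
      < Fintype.card Q.α * (Q.rk x + 1) := by
    rw [Nat.mul_add, Nat.mul_one]; omega
  have h2 : Fintype.card Q.α * (Q.rk x + 1) ≤ Fintype.card Q.α * Q.rk y :=
    Nat.mul_le_mul_left _ h
  unfold GrPoset.key
  omega

/-- The order relation induced by the key. -/
def keyRel (x y : Q.α) : Prop := Q.key x ≤ Q.key y

instance : DecidableRel Q.keyRel := fun _ _ => Nat.decLe _ _
instance : IsTrans Q.α Q.keyRel := ⟨fun _ _ _ => Nat.le_trans⟩
instance : IsAntisymm Q.α Q.keyRel := ⟨fun _ _ h1 h2 => Q.key_injective (Nat.le_antisymm h1 h2)⟩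
instance : IsTotal Q.α Q.keyRel := ⟨fun _ _ => Nat.le_total _ _⟩

/-- Sorting a finset (typically a chain) by the key. -/
def sortC (C : Finset Q.α) : List Q.α := C.sort Q.keyRel

theorem mem_sortC {C : Finset Q.α} {z : Q.α} : z ∈ Q.sortC C ↔ z ∈ C :=
  Finset.mem_sort _

theorem sortC_nodup (C : Finset Q.α) : (Q.sortC C).Nodup := Finset.sort_nodup _ _

theorem sortC_length (C : Finset Q.α) : (Q.sortC C).length = C.card :=
  Finset.length_sort _

theorem sortC_sorted_lt {C : Finset Q.α} (hC : IsChain (· ≤ ·) (C : Set Q.α)) :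
    (Q.sortC C).Pairwise (· < ·) := by
  have h1 : (Q.sortC C).Pairwise Q.keyRel := Finset.pairwise_sort _ _
  have h2 : (Q.sortC C).Pairwise (· ≠ ·) := Q.sortC_nodup C
  refine (h1.and h2).imp_of_mem ?_
  intro a b ha hb hab
  have haC : a ∈ C := Q.mem_sortC.mp ha
  have hbC : b ∈ C := Q.mem_sortC.mp hb
  rcases hC (Finset.mem_coe.mpr haC) (Finset.mem_coe.mpr hbC) hab.2 with h | h
  · exact lt_of_le_of_ne h hab.2
  · exfalso
    have hlt : b < a := lt_of_le_of_ne h (Ne.symm hab.2)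
    have h3 := Q.key_lt_of_rk_lt (Q.rk_lt a b hlt)
    exact absurd hab.1 (not_le.mpr h3)

/-- The sorted chain together with the bottom and top elements. -/
def fullList (C : Finset Q.α) : List Q.α := ⊥ :: (Q.sortC C ++ [⊤])

theorem fullList_length (C : Finset Q.α) : (Q.fullList C).length = C.card + 2 := by
  simp [GrPoset.fullList, Q.sortC_length]

theorem fullList_sorted {C : Finset Q.α} (hrank : 1 ≤ Q.rank)
    (hC : IsChain (· ≤ ·) (C : Set Q.α)) (hb : ⊥ ∉ C) (ht : ⊤ ∉ C) :
    (Q.fullList C).Pairwise (· < ·) := by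
  have hbt : (⊥ : Q.α) < ⊤ := by
    refine lt_of_le_of_ne bot_le fun h => ?_
    have h2 := Q.rk_bot
    rw [h] at h2
    unfold GrPoset.rank at hrank
    omega
  have hs := Q.sortC_sorted_lt hC
  unfold GrPoset.fullList
  refine List.pairwise_cons.mpr
    ⟨?_, List.pairwise_append.mpr ⟨hs, List.pairwise_singleton _ _, ?_⟩⟩
  · intro z hz
    rcases List.mem_append.mp hz with hz | hz
    · exact Ne.bot_lt fun h => hb (h ▸ Q.mem_sortC.mp hz)
    · rw [List.mem_singleton] at hz
      subst hz
      exact hbt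
  · intro a ha b hb'
    rw [List.mem_singleton] at hb'
    subst hb'
    exact lt_of_le_of_ne le_top fun h => ht (h ▸ Q.mem_sortC.mp ha)

theorem fullList_getElem_zero (C : Finset Q.α) (h : 0 < (Q.fullList C).length) :
    (Q.fullList C)[0] = ⊥ := rfl

theorem fullList_getElem_last (C : Finset Q.α) (h : C.card + 1 < (Q.fullList C).length) :
    (Q.fullList C)[C.card + 1] = ⊤ := by
  simp only [GrPoset.fullList]
  rw [List.getElem_cons_succ, List.getElem_append_right (by rw [Q.sortC_length])]
  simp [Q.sortC_length]

theorem fullList_getElem_interior (C : Finset Q.α) (j : ℕ) (hj : j < C.card)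
    (h : j + 1 < (Q.fullList C).length) :
    (Q.fullList C)[j + 1] = (Q.sortC C)[j]'(by rw [Q.sortC_length]; exact hj) := by
  simp only [GrPoset.fullList]
  rw [List.getElem_cons_succ, List.getElem_append_left (by rw [Q.sortC_length]; exact hj)]

theorem fullList_getElem_mem (C : Finset Q.α) (j : ℕ) (h1 : 1 ≤ j) (h2 : j ≤ C.card)
    (h : j < (Q.fullList C).length) : (Q.fullList C)[j] ∈ C := by
  obtain ⟨j, rfl⟩ : ∃ j', j = j' + 1 := ⟨j - 1, by omega⟩
  rw [Q.fullList_getElem_interior C j (by omega)]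
  exact Q.mem_sortC.mp (List.getElem_mem _)

theorem exists_fullList_getElem (C : Finset Q.α) {c : Q.α} (hc : c ∈ C) :
    ∃ j : ℕ, j < C.card ∧
      ∀ (h : j + 1 < (Q.fullList C).length), (Q.fullList C)[j + 1] = c := by
  have hcm : c ∈ Q.sortC C := Q.mem_sortC.mpr hc
  obtain ⟨j, hj, hje⟩ := List.mem_iff_getElem.mp hcm
  rw [Q.sortC_length] at hj
  refine ⟨j, hj, fun h => ?_⟩
  rw [Q.fullList_getElem_interior C j hj]
  exact hje

theorem mem_fullList {C : Finset Q.α} {z : Q.α} :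
    z ∈ Q.fullList C ↔ z = ⊥ ∨ z ∈ C ∨ z = ⊤ := by
  simp [GrPoset.fullList, Q.mem_sortC]

theorem empty_mem_intChains : (∅ : Finset Q.α) ∈ Q.intChains := by
  simp only [GrPoset.intChains, Finset.mem_filter, Finset.mem_univ, true_and]
  refine ⟨?_, by simp, by simp⟩
  rw [Finset.coe_empty]
  exact IsChain.empty

end GrPoset

variable {P P' : GrPoset} {pi : P.α → P'.α}

theorem pi_lt (hmono : Monotone pi) (hrank : ∀ u, P'.rk (pi u) = P.rk u)
    {a b : P.α} (h : a < b) : pi a < pi b := by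
  refine lt_of_le_of_ne (hmono h.le) fun he => ?_
  have h2 := P.rk_lt b a h
  rw [← hrank a, ← hrank b, he] at h2
  omega

theorem pi_injOn_chain (hrank : ∀ u, P'.rk (pi u) = P.rk u) {C : Finset P.α}
    (hC : IsChain (· ≤ ·) (C : Set P.α)) : Set.InjOn pi (C : Set P.α) := by
  intro a ha b hb hab
  by_contra hne
  rcases hC ha hb hne with h | h
  · have h2 := P.rk_lt b a (lt_of_le_of_ne h hne)
    rw [← hrank a, ← hrank b, hab] at h2
    omega
  · have h2 := P.rk_lt a b (lt_of_le_of_ne h (Ne.symm hne))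
    rw [← hrank a, ← hrank b, hab] at h2
    omega

end Aux


/-- if `π : P → P'` is an order- and rank-preserving surjection of graded
posets of rank `n+2` such that every chain of `P'` from `0̂` to `1̂` of length `k ≥ 2`
has exactly two elementwise preimage chains in `P`, then
`Ψ(P) = 2·Ψ(P') - (a-b)^{n+1}`. -/
theorem psi_double_cover (n : ℕ) (P P' : GrPoset)
    (hP : P.rank = n + 2) (hP' : P'.rank = n + 2)
    (pi : P.α → P'.α) (hmono : Monotone pi)
    (hrank : ∀ u, P'.rk (pi u) = P.rk u)
    (hbot : pi ⊥ = ⊥) (htop : pi ⊤ = ⊤) (hsurj : Function.Surjective pi)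
    (hcount : ∀ k : ℕ, 2 ≤ k → ∀ x : Fin (k + 1) → P'.α,
      StrictMono x → x 0 = ⊥ → x (Fin.last k) = ⊤ →
      Set.ncard {y : Fin (k + 1) → P.α |
          StrictMono y ∧ y 0 = ⊥ ∧ y (Fin.last k) = ⊤ ∧ ∀ i, pi (y i) = x i} = 2) :
    P.psi = (2 : ℤ) • P'.psi - amb ^ (n + 1) := by
  classical
  have hrkeq : P.rank = P'.rank := by rw [hP, hP']
  -- the image map sends interior chains to interior chains
  have hmem : ∀ C ∈ P.intChains, C.image pi ∈ P'.intChains := by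
    intro C hC
    simp only [GrPoset.intChains, Finset.mem_filter, Finset.mem_univ, true_and] at hC ⊢
    obtain ⟨hch, hb, ht⟩ := hC
    refine ⟨?_, ?_, ?_⟩
    · rw [Finset.coe_image]
      exact hch.image_of_map_rel _ _ _ fun _ _ h => hmono h
    · intro hmem'
      obtain ⟨u, hu, hpu⟩ := Finset.mem_image.mp hmem'
      have h0 : P.rk u = 0 := by rw [← hrank u, hpu, P'.rk_bot]
      exact hb (P.eq_bot_of_rk_eq_zero h0 ▸ hu)
    · intro hmem'
      obtain ⟨u, hu, hpu⟩ := Finset.mem_image.mp hmem'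
      have h0 : P.rk u = P.rank := by
        rw [← hrank u, hpu, hrkeq]
        rfl
      exact ht (P.eq_top_of_rk_eq_rank h0 ▸ hu)
  -- the weight is preserved
  have hwt : ∀ C : Finset P.α, P.wt C = P'.wt (C.image pi) := by
    intro C
    have himg : (C.image pi).image P'.rk = C.image P.rk := by
      rw [Finset.image_image]
      exact Finset.image_congr fun u _ => hrank u
    unfold GrPoset.wt
    rw [himg, hrkeq]
  have hwt_empty : P'.wt (∅ : Finset P'.α) = amb ^ (n + 1) := by
    unfold GrPoset.wt
    rw [Finset.image_empty, Finset.sort_empty]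
    show amb ^ (P'.rank - 0 - 1) = amb ^ (n + 1)
    rw [hP']
    norm_num
  -- the fiber over the empty chain is the empty chain
  have hfiber_empty :
      (P.intChains.filter fun C => Finset.image pi C = (∅ : Finset P'.α)) = {∅} := by
    ext C
    simp only [Finset.mem_filter, Finset.mem_singleton, Finset.image_eq_empty]
    exact ⟨fun h => h.2, by rintro rfl; exact ⟨P.empty_mem_intChains, rfl⟩⟩
  -- the fiber over a nonempty chain has exactly two elements
  have hfiber_card : ∀ C' ∈ P'.intChains, C' ≠ ∅ →
      (P.intChains.filter fun C => Finset.image pi C = C').card = 2 := by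
    intro C' hC'mem hne
    simp only [GrPoset.intChains, Finset.mem_filter, Finset.mem_univ, true_and] at hC'mem
    obtain ⟨hch', hb', ht'⟩ := hC'mem
    have hm1 : 1 ≤ C'.card := Finset.card_pos.mpr (Finset.nonempty_iff_ne_empty.mpr hne)
    have hL'len : (P'.fullList C').length = C'.card + 1 + 1 := by
      rw [P'.fullList_length]
    have hL'sorted : (P'.fullList C').Pairwise (· < ·) :=
      P'.fullList_sorted (by rw [hP']; omega) hch' hb' ht'
    set x : Fin (C'.card + 1 + 1) → P'.α :=
      fun i => (P'.fullList C').get (Fin.cast hL'len.symm i) with hxdef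
    have hxget : ∀ i : Fin (C'.card + 1 + 1),
        x i = (P'.fullList C')[(i : ℕ)]'(by rw [hL'len]; exact i.2) := fun i => rfl
    have hxmono : StrictMono x := fun i j hij => hL'sorted.sortedLT.strictMono_get hij
    have hx0 : x 0 = ⊥ := by
      rw [hxget]
      simp only [Fin.val_zero]
      exact P'.fullList_getElem_zero C' _
    have hxlast : x (Fin.last (C'.card + 1)) = ⊤ := by
      rw [hxget]
      simp only [Fin.val_last]
      exact P'.fullList_getElem_last C' (by rw [hL'len]; omega)
    set G : (Fin (C'.card + 1 + 1) → P.α) → Finset P.α :=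
      fun y => ((Finset.univ.image y).erase ⊥).erase ⊤ with hGdef
    have hGmem : ∀ (y : Fin (C'.card + 1 + 1) → P.α) (z : P.α),
        z ∈ G y ↔ z ≠ ⊤ ∧ z ≠ ⊥ ∧ ∃ i, y i = z := by
      intro y z
      rw [hGdef]
      simp only [Finset.mem_erase, Finset.mem_image, Finset.mem_univ, true_and]
    have hchar : ∀ y : Fin (C'.card + 1 + 1) → P.α, StrictMono y → y 0 = ⊥ →
        y (Fin.last (C'.card + 1)) = ⊤ →
        ∀ z : P.α, z ∈ G y ↔ ∃ i, i ≠ 0 ∧ i ≠ Fin.last (C'.card + 1) ∧ y i = z := by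
      intro y hy1 hy2 hy3 z
      rw [hGmem]
      constructor
      · rintro ⟨hzt, hzb, i, rfl⟩
        refine ⟨i, ?_, ?_, rfl⟩
        · rintro rfl; exact hzb hy2
        · rintro rfl; exact hzt hy3
      · rintro ⟨i, hi0, hil, rfl⟩
        refine ⟨?_, ?_, ⟨i, rfl⟩⟩
        · intro h; exact hil (hy1.injective (h.trans hy3.symm))
        · intro h; exact hi0 (hy1.injective (h.trans hy2.symm))
    have hGint : ∀ y : Fin (C'.card + 1 + 1) → P.α, StrictMono y → G y ∈ P.intChains := by
      intro y hy1
      simp only [GrPoset.intChains, Finset.mem_filter, Finset.mem_univ, true_and]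
      refine ⟨?_, ?_, ?_⟩
      · intro z hz w hw hzw
        obtain ⟨-, -, i, rfl⟩ := (hGmem y z).mp (Finset.mem_coe.mp hz)
        obtain ⟨-, -, j, rfl⟩ := (hGmem y w).mp (Finset.mem_coe.mp hw)
        rcases lt_trichotomy i j with h | h | h
        · exact Or.inl (hy1 h).le
        · exact absurd (congrArg y h) hzw
        · exact Or.inr (hy1 h).le
      · exact fun h => ((hGmem y ⊥).mp h).2.1 rfl
      · exact fun h => ((hGmem y ⊤).mp h).1 rfl
    have hGimg : ∀ y : Fin (C'.card + 1 + 1) → P.α, StrictMono y → y 0 = ⊥ →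
        y (Fin.last (C'.card + 1)) = ⊤ → (∀ i, pi (y i) = x i) →
        Finset.image pi (G y) = C' := by
      intro y hy1 hy2 hy3 hy4
      apply Finset.ext
      intro c
      constructor
      · intro hc
        obtain ⟨z, hz, rfl⟩ := Finset.mem_image.mp hc
        obtain ⟨i, hi0, hil, rfl⟩ := (hchar y hy1 hy2 hy3 z).mp hz
        have hiv0 : (i : ℕ) ≠ 0 := fun h => hi0 (Fin.ext (by rw [Fin.val_zero]; exact h))
        have hivl : (i : ℕ) ≠ C'.card + 1 := fun h => hil (Fin.ext (by rw [Fin.val_last]; exact h))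
        have hiub : (i : ℕ) < C'.card + 1 + 1 := i.2
        rw [hy4 i, hxget i]
        exact P'.fullList_getElem_mem C' (i : ℕ) (by omega) (by omega) _
      · intro hc
        obtain ⟨j, hj, hgot⟩ := P'.exists_fullList_getElem C' hc
        refine Finset.mem_image.mpr ⟨y ⟨j + 1, by omega⟩, ?_, ?_⟩
        · refine (hchar y hy1 hy2 hy3 _).mpr ⟨⟨j + 1, by omega⟩, ?_, ?_, rfl⟩
          · intro h
            have := (by simpa [Fin.ext_iff] using h : j + 1 = 0)
            omega
          · intro h
            have := (by simpa [Fin.ext_iff] using h : j + 1 = C'.card + 1)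
            omega
        · rw [hy4, hxget]
          exact hgot _
    have hsurjG : ∀ C ∈ P.intChains.filter (fun C => Finset.image pi C = C'),
        ∃ y ∈ {y : Fin (C'.card + 1 + 1) → P.α | StrictMono y ∧ y 0 = ⊥ ∧
          y (Fin.last (C'.card + 1)) = ⊤ ∧ ∀ i, pi (y i) = x i}, G y = C := by
      intro C hC
      rw [Finset.mem_filter] at hC
      obtain ⟨hCint, hCimg⟩ := hC
      simp only [GrPoset.intChains, Finset.mem_filter, Finset.mem_univ, true_and] at hCint
      obtain ⟨hch, hbC, htC⟩ := hCint
      have hinj : Set.InjOn pi (C : Set P.α) := pi_injOn_chain hrank hch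
      have hcard : C.card = C'.card := by
        rw [← hCimg]
        exact (Finset.card_image_of_injOn hinj).symm
      have hLlen : (P.fullList C).length = C'.card + 1 + 1 := by
        rw [P.fullList_length, hcard]
      have hLsorted : (P.fullList C).Pairwise (· < ·) :=
        P.fullList_sorted (by rw [hP]; omega) hch hbC htC
      have hmapsort : (P.sortC C).map pi = P'.sortC C' := by
        have hs1 : ((P.sortC C).map pi).Pairwise (· < ·) :=
          List.Pairwise.map pi (fun a b h => pi_lt hmono hrank h) (P.sortC_sorted_lt hch)
        have hn1 : ((P.sortC C).map pi).Nodup := by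
          refine (P.sortC_nodup C).map_on ?_
          intro u hu v hv huv
          exact hinj (Finset.mem_coe.mpr (P.mem_sortC.mp hu))
            (Finset.mem_coe.mpr (P.mem_sortC.mp hv)) huv
        have hfs : ((P.sortC C).map pi).toFinset = (P'.sortC C').toFinset := by
          apply Finset.ext
          intro z
          simp only [List.mem_toFinset, List.mem_map]
          rw [P'.mem_sortC]
          constructor
          · rintro ⟨u, hu, rfl⟩
            rw [← hCimg]
            exact Finset.mem_image_of_mem pi (P.mem_sortC.mp hu)
          · intro hz
            rw [← hCimg] at hz
            obtain ⟨u, hu, rfl⟩ := Finset.mem_image.mp hz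
            exact ⟨u, P.mem_sortC.mpr hu, rfl⟩
        haveI : Std.Antisymm (· < · : P'.α → P'.α → Prop) := ⟨fun a b h1 h2 => absurd h1 (asymm h2)⟩
        exact List.Perm.eq_of_pairwise' hs1 (P'.sortC_sorted_lt hch')
          (List.perm_of_nodup_nodup_toFinset_eq hn1 (P'.sortC_nodup C') hfs)
      have hmapfull : (P.fullList C).map pi = P'.fullList C' := by
        unfold GrPoset.fullList
        rw [List.map_cons, List.map_append, hmapsort, hbot]
        simp [htop]
      set y : Fin (C'.card + 1 + 1) → P.α :=
        fun i => (P.fullList C).get (Fin.cast hLlen.symm i) with hydef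
      have hyget : ∀ i : Fin (C'.card + 1 + 1),
          y i = (P.fullList C)[(i : ℕ)]'(by rw [hLlen]; exact i.2) := fun i => rfl
      have hy1 : StrictMono y := fun i j hij => hLsorted.sortedLT.strictMono_get hij
      have hy2 : y 0 = ⊥ := by
        rw [hyget]
        simp only [Fin.val_zero]
        exact P.fullList_getElem_zero C _
      have hy3 : y (Fin.last (C'.card + 1)) = ⊤ := by
        rw [hyget]
        simp only [Fin.val_last]
        have h := P.fullList_getElem_last C (by rw [P.fullList_length]; omega)
        convert h using 2
        omega
      have hy4 : ∀ i, pi (y i) = x i := by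
        intro i
        rw [hyget i, hxget i]
        simp only [← hmapfull, List.getElem_map]
      have hGy : G y = C := by
        apply Finset.ext
        intro z
        rw [hchar y hy1 hy2 hy3 z]
        constructor
        · rintro ⟨i, hi0, hil, rfl⟩
          have hiv0 : (i : ℕ) ≠ 0 := fun h => hi0 (Fin.ext (by rw [Fin.val_zero]; exact h))
          have hivl : (i : ℕ) ≠ C'.card + 1 := fun h => hil (Fin.ext (by rw [Fin.val_last]; exact h))
          have hiub : (i : ℕ) < C'.card + 1 + 1 := i.2
          rw [hyget i]
          exact P.fullList_getElem_mem C (i : ℕ) (by omega) (by omega) _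
        · intro hz
          obtain ⟨j, hj, hgot⟩ := P.exists_fullList_getElem C hz
          refine ⟨⟨j + 1, by omega⟩, ?_, ?_, ?_⟩
          · intro h
            have := (by simpa [Fin.ext_iff] using h : j + 1 = 0)
            omega
          · intro h
            have := (by simpa [Fin.ext_iff] using h : j + 1 = C'.card + 1)
            omega
          · rw [hyget]
            exact hgot _
      exact ⟨y, ⟨hy1, hy2, hy3, hy4⟩, hGy⟩
    have himgeq : G '' {y : Fin (C'.card + 1 + 1) → P.α | StrictMono y ∧ y 0 = ⊥ ∧
          y (Fin.last (C'.card + 1)) = ⊤ ∧ ∀ i, pi (y i) = x i}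
        = ↑(P.intChains.filter fun C => Finset.image pi C = C') := by
      apply Set.ext
      intro C
      constructor
      · rintro ⟨y, ⟨hy1, hy2, hy3, hy4⟩, rfl⟩
        rw [Finset.mem_coe, Finset.mem_filter]
        exact ⟨hGint y hy1, hGimg y hy1 hy2 hy3 hy4⟩
      · intro hC
        obtain ⟨y, hyS, hGy⟩ := hsurjG C (Finset.mem_coe.mp hC)
        exact ⟨y, hyS, hGy⟩
    have hinjG : Set.InjOn G {y : Fin (C'.card + 1 + 1) → P.α | StrictMono y ∧ y 0 = ⊥ ∧
        y (Fin.last (C'.card + 1)) = ⊤ ∧ ∀ i, pi (y i) = x i} := by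
      rintro y ⟨hy1, hy2, hy3, hy4⟩ y' ⟨hy1', hy2', hy3', hy4'⟩ hG
      funext i
      by_cases hi0 : i = 0
      · rw [hi0, hy2, hy2']
      by_cases hil : i = Fin.last (C'.card + 1)
      · rw [hil, hy3, hy3']
      have hyG : y i ∈ G y := (hchar y hy1 hy2 hy3 (y i)).mpr ⟨i, hi0, hil, rfl⟩
      rw [hG] at hyG
      obtain ⟨j, hj0, hjl, hje⟩ := (hchar y' hy1' hy2' hy3' (y i)).mp hyG
      have hx_eq : x j = x i := by
        rw [← hy4' j, hje]
        exact hy4 i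
      have hji : j = i := hxmono.injective hx_eq
      rw [← hje, hji]
    have hS := hcount (C'.card + 1) (by omega) x hxmono hx0 hxlast
    calc (P.intChains.filter fun C => Finset.image pi C = C').card
        = (↑(P.intChains.filter fun C => Finset.image pi C = C') :
            Set (Finset P.α)).ncard := (Set.ncard_coe_finset _).symm
      _ = (G '' {y : Fin (C'.card + 1 + 1) → P.α | StrictMono y ∧ y 0 = ⊥ ∧
            y (Fin.last (C'.card + 1)) = ⊤ ∧ ∀ i, pi (y i) = x i}).ncard := by
          rw [himgeq]
      _ = Set.ncard {y : Fin (C'.card + 1 + 1) → P.α | StrictMono y ∧ y 0 = ⊥ ∧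
            y (Fin.last (C'.card + 1)) = ⊤ ∧ ∀ i, pi (y i) = x i} :=
          Set.ncard_image_of_injOn hinjG
      _ = 2 := hS
  -- now assemble the sum
  have hkey := Finset.sum_fiberwise_of_maps_to hmem P.wt
  unfold GrPoset.psi
  rw [← hkey]
  have step : ∀ C' ∈ P'.intChains,
      (∑ C ∈ P.intChains.filter fun C => Finset.image pi C = C', P.wt C)
        = (2 : ℤ) • P'.wt C' - (if C' = (∅ : Finset P'.α) then P'.wt C' else 0) := by
    intro C' hC'
    have hconst : ∀ C ∈ P.intChains.filter (fun C => Finset.image pi C = C'),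
        P.wt C = P'.wt C' := by
      intro C hC
      rw [Finset.mem_filter] at hC
      rw [hwt C, hC.2]
    rw [Finset.sum_congr rfl hconst, Finset.sum_const]
    by_cases h : C' = ∅
    · rw [if_pos h, h, hfiber_empty]
      rw [Finset.card_singleton, one_nsmul, two_smul]
      abel
    · rw [if_neg h, hfiber_card C' hC' h, sub_zero, two_nsmul, two_smul]
  rw [Finset.sum_congr rfl step, Finset.sum_sub_distrib, ← Finset.smul_sum,
    Finset.sum_ite_eq' P'.intChains (∅ : Finset P'.α) (fun C' => P'.wt C'),
    if_pos P'.empty_mem_intChains, hwt_empty]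


end CD

end
end

section
/- Let n ≥ 1, let A be an m×n real matrix all of whose entries are rational, let b ∈ ℝᵐ, and suppose that V = {x ∈ ℝⁿ : A·x = b} is nonempty, of dimension k as an affine subspace of ℝⁿ. Let π : ℝⁿ → ℝⁿ/ℤⁿ be the quotient map onto the n-dimensional torus (the quotient of the additive group ℝⁿ by the subgroup ℤⁿ of integer vectors, with the quotient topology). Then the image π(V), equipped with the subspace topology, is homeomorphic to the k-dimensional torus ℝᵏ/ℤᵏ. -/
/-- The subgroup `ℤⁿ` of integer vectors in `ℝⁿ`. -/
def intLattice (n : ℕ) : AddSubgroup (Fin n → ℝ) :=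
  AddSubgroup.pi Set.univ fun _ => AddSubgroup.zmultiples (1 : ℝ)

/-- The `n`-dimensional torus `ℝⁿ/ℤⁿ`, with the quotient topology. -/
abbrev Torus (n : ℕ) := (Fin n → ℝ) ⧸ intLattice n

open Module Submodule Matrix

lemma indep_transfer {m : ℕ} {ι : Type*} [Fintype ι] [DecidableEq ι] (v : ι → (Fin m → ℚ))
    (hv : LinearIndependent ℚ v) :
    LinearIndependent ℝ (fun i => (fun j => ((v i j : ℚ) : ℝ)) : ι → Fin m → ℝ) := by
  classical
  set c : ℚ →+* ℝ := (Rat.castHom ℝ) with hc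
  set U : Matrix (Fin m) ι ℚ := Matrix.of fun j i => v i j with hU
  have hinj : Function.Injective U.mulVec := by
    rw [Matrix.mulVec_injective_iff]
    exact hv
  have hker : LinearMap.ker U.mulVecLin = ⊥ :=
    LinearMap.ker_eq_bot.mpr hinj
  obtain ⟨g, hg⟩ := U.mulVecLin.exists_leftInverse_of_injective hker
  set G : Matrix ι (Fin m) ℚ := LinearMap.toMatrix' g with hG
  have hGU : G * U = 1 := by
    have h2 := congrArg LinearMap.toMatrix' hg
    rw [← Matrix.toLin'_apply' U] at h2
    rwa [LinearMap.toMatrix'_comp, LinearMap.toMatrix'_toLin', LinearMap.toMatrix'_id] at h2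
  have hGU' : (G.map c) * (U.map c) = 1 := by
    rw [← Matrix.map_mul, hGU, Matrix.map_one c (map_zero c) (map_one c)]
  have hinj' : Function.Injective (U.map c).mulVec := by
    intro x y hxy
    have := congrArg ((G.map c).mulVec) hxy
    rwa [Matrix.mulVec_mulVec, Matrix.mulVec_mulVec, hGU', Matrix.one_mulVec,
      Matrix.one_mulVec] at this
  have := Matrix.mulVec_injective_iff.mp hinj'
  exact this

lemma rank_le_rank_map {m n : ℕ} (B : Matrix (Fin m) (Fin n) ℚ) :
    B.rank ≤ (B.map Rat.cast : Matrix (Fin m) (Fin n) ℝ).rank := by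
  classical
  obtain ⟨s, hst, hsp, hind⟩ := exists_linearIndependent ℚ (Set.range Bᵀ)
  have hfin : s.Finite := hind.setFinite
  haveI := hfin.fintype
  have h1 : B.rank = Fintype.card s := by
    rw [Matrix.rank, Matrix.range_mulVecLin, show Set.range B.col = Set.range Bᵀ from rfl, ← hsp, finrank_span_set_eq_card hind,
      Set.toFinset_card]
  have hind' := indep_transfer (fun i : s => (i : Fin m → ℚ)) hind
  have hmem : ∀ i : s, (fun j => ((i : Fin m → ℚ) j : ℝ)) ∈
      LinearMap.range (B.map Rat.cast : Matrix (Fin m) (Fin n) ℝ).mulVecLin := by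
    intro i
    obtain ⟨l, hl⟩ := hst i.2
    rw [Matrix.range_mulVecLin]
    refine subset_span ⟨l, ?_⟩
    funext j
    simp [← hl]
  set w : s → ↥(LinearMap.range (B.map Rat.cast : Matrix (Fin m) (Fin n) ℝ).mulVecLin) :=
    fun i => ⟨_, hmem i⟩ with hw
  have hindw : LinearIndependent ℝ w := by
    apply LinearIndependent.of_comp (Submodule.subtype _)
    exact hind'
  have := hindw.fintype_card_le_finrank
  rw [h1, Matrix.rank]
  exact this

lemma ratKer_span {m n : ℕ} (B : Matrix (Fin m) (Fin n) ℚ) :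
    span ℝ ((fun v : Fin n → ℚ => (fun j => (v j : ℝ))) ''
        (LinearMap.ker B.mulVecLin : Set (Fin n → ℚ)))
      = LinearMap.ker (B.map Rat.cast : Matrix (Fin m) (Fin n) ℝ).mulVecLin := by
  classical
  set A : Matrix (Fin m) (Fin n) ℝ := B.map Rat.cast with hA
  have hle : span ℝ ((fun v : Fin n → ℚ => (fun j => (v j : ℝ))) ''
      (LinearMap.ker B.mulVecLin : Set (Fin n → ℚ))) ≤ LinearMap.ker A.mulVecLin := by
    rw [span_le]
    rintro x ⟨v, hv, rfl⟩
    have hv' : B.mulVec v = 0 := hv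
    simp only [SetLike.mem_coe, LinearMap.mem_ker, Matrix.mulVecLin_apply]
    funext j
    have : ((B.map Rat.cast : Matrix (Fin m) (Fin n) ℝ) *ᵥ (fun j => ((v j : ℚ) : ℝ))) j = 0 := by
      rw [show (fun j => ((v j : ℚ) : ℝ)) = ((Rat.castHom ℝ) ∘ v) from rfl,
        show (B.map Rat.cast : Matrix (Fin m) (Fin n) ℝ) = B.map (Rat.castHom ℝ) from rfl,
        ← RingHom.map_mulVec, hv']
      simp
    simpa [hA] using this
  -- dimension comparison
  have hrn1 := LinearMap.finrank_range_add_finrank_ker A.mulVecLin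
  have hrn2 := LinearMap.finrank_range_add_finrank_ker (B.mulVecLin)
  have hpi1 : finrank ℝ (Fin n → ℝ) = n := by simp [Module.finrank_pi]
  have hpi2 : finrank ℚ (Fin n → ℚ) = n := by simp [Module.finrank_pi]
  have hrank := rank_le_rank_map B
  rw [Matrix.rank, Matrix.rank] at hrank
  rw [show (B.map Rat.cast : Matrix (Fin m) (Fin n) ℝ) = A from rfl] at hrank
  have hkd : finrank ℝ (LinearMap.ker A.mulVecLin) ≤ finrank ℚ (LinearMap.ker B.mulVecLin) := by
    rw [hpi1] at hrn1; rw [hpi2] at hrn2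
    omega
  -- the image of a basis of the rational kernel is ℝ-independent and lies in the span
  set d := finrank ℚ (LinearMap.ker B.mulVecLin) with hd
  set bQ := Module.finBasis ℚ (LinearMap.ker B.mulVecLin) with hbQ
  have hindQ : LinearIndependent ℚ (fun i : Fin d => ((bQ i : Fin n → ℚ))) :=
    bQ.linearIndependent.map' (Submodule.subtype _) (Submodule.ker_subtype _)
  have hindR := indep_transfer (fun i : Fin d => ((bQ i : Fin n → ℚ))) hindQ
  have hmem : ∀ i : Fin d, (fun j => ((bQ i : Fin n → ℚ) j : ℝ)) ∈
      span ℝ ((fun v : Fin n → ℚ => (fun j => (v j : ℝ))) ''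
        (LinearMap.ker B.mulVecLin : Set (Fin n → ℚ))) :=
    fun i => subset_span ⟨_, (bQ i).2, rfl⟩
  have hdle : d ≤ finrank ℝ (span ℝ ((fun v : Fin n → ℚ => (fun j => (v j : ℝ))) ''
      (LinearMap.ker B.mulVecLin : Set (Fin n → ℚ)))) := by
    set w : Fin d → ↥(span ℝ ((fun v : Fin n → ℚ => (fun j => (v j : ℝ))) ''
      (LinearMap.ker B.mulVecLin : Set (Fin n → ℚ)))) := fun i => ⟨_, hmem i⟩ with hwdef
    have hindw : LinearIndependent ℝ w :=
      LinearIndependent.of_comp (Submodule.subtype _) hindR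
    simpa using hindw.fintype_card_le_finrank
  exact (Submodule.eq_of_le_of_finrank_le hle (le_trans hkd hdle)).symm ▸ rfl

lemma intLattice_eq (n : ℕ) :
    intLattice n = (span ℤ (Set.range (Pi.basisFun ℝ (Fin n)))).toAddSubgroup := by
  ext x
  rw [Submodule.mem_toAddSubgroup, Basis.mem_span_iff_repr_mem]
  simp only [intLattice, AddSubgroup.mem_pi, Set.mem_univ, forall_true_left,
    AddSubgroup.mem_zmultiples_iff, Pi.basisFun_repr]
  refine forall_congr' fun i => ?_
  constructor
  · rintro ⟨z, hz⟩; exact ⟨z, by simpa using hz⟩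
  · rintro ⟨z, hz⟩; exact ⟨z, by simpa using hz⟩

lemma intKer_span {m n : ℕ} (B : Matrix (Fin m) (Fin n) ℚ) :
    span ℝ {y : Fin n → ℝ |
        y ∈ LinearMap.ker (B.map Rat.cast : Matrix (Fin m) (Fin n) ℝ).mulVecLin ∧
        ∀ i, ∃ z : ℤ, y i = (z : ℝ)}
      = LinearMap.ker (B.map Rat.cast : Matrix (Fin m) (Fin n) ℝ).mulVecLin := by
  refine le_antisymm (span_le.mpr fun y hy => hy.1) ?_
  conv_lhs => rw [← ratKer_span B]
  rw [span_le]
  rintro x ⟨v, hv, rfl⟩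
  set N : ℕ := ∏ i, (v i).den with hNdef
  have hN : (N : ℚ) ≠ 0 := by
    simp only [hNdef]
    push_cast
    exact Finset.prod_ne_zero_iff.mpr fun i _ => Nat.cast_ne_zero.mpr (v i).den_nz
  set w : Fin n → ℚ := (N : ℚ) • v with hw
  have hwker : w ∈ LinearMap.ker B.mulVecLin := Submodule.smul_mem _ _ hv
  have hint : ∀ j, ∃ z : ℤ, ((w j : ℚ) : ℝ) = (z : ℝ) := by
    intro j
    obtain ⟨t, ht⟩ : (v j).den ∣ N := Finset.dvd_prod_of_mem _ (Finset.mem_univ j)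
    refine ⟨(v j).num * t, ?_⟩
    have hden : ((v j).den : ℚ) ≠ 0 := Nat.cast_ne_zero.mpr (v j).den_nz
    have hq : ((v j).den : ℚ) * v j = (v j).num := by
      rw [mul_comm, Rat.mul_den_eq_num]
    have : w j = ((v j).num * t : ℤ) := by
      simp only [hw, Pi.smul_apply, smul_eq_mul, ht]
      push_cast
      rw [mul_comm ((v j).den : ℚ) (t : ℚ), mul_assoc, hq]
      ring
    rw [this]
    push_cast
    ring
  have hmem : (fun j => ((w j : ℚ) : ℝ)) ∈ span ℝ {y : Fin n → ℝ |
      y ∈ LinearMap.ker (B.map Rat.cast : Matrix (Fin m) (Fin n) ℝ).mulVecLin ∧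
      ∀ i, ∃ z : ℤ, y i = (z : ℝ)} := by
    refine subset_span ⟨?_, hint⟩
    rw [← ratKer_span B]
    exact subset_span ⟨w, hwker, rfl⟩
  have hxw : (fun j => ((v j : ℚ) : ℝ)) = ((N : ℝ)⁻¹) • (fun j => ((w j : ℚ) : ℝ)) := by
    funext j
    simp only [hw, Pi.smul_apply, smul_eq_mul]
    push_cast
    have hNR : (N : ℝ) ≠ 0 := by exact_mod_cast fun h => hN (by exact_mod_cast h)
    field_simp
  show (fun j => ((v j : ℚ) : ℝ)) ∈ _
  rw [hxw]
  exact Submodule.smul_mem _ _ hmem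

def quotHomeo {G H : Type*} [AddCommGroup G] [TopologicalSpace G] [IsTopologicalAddGroup G]
    [AddCommGroup H] [TopologicalSpace H] [IsTopologicalAddGroup H]
    (e : G ≃+ H) (he : Continuous e) (hes : Continuous e.symm)
    (S : AddSubgroup G) (T : AddSubgroup H)
    (h : S.map e.toAddMonoidHom = T) : (G ⧸ S) ≃ₜ (H ⧸ T) where
  toEquiv := (QuotientAddGroup.congr S T e h).toEquiv
  continuous_toFun := by
    rw [(QuotientAddGroup.isQuotientMap_mk S).continuous_iff]
    exact (continuous_quot_mk.comp he)
  continuous_invFun := by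
    rw [(QuotientAddGroup.isQuotientMap_mk T).continuous_iff]
    exact (continuous_quot_mk.comp hes)

lemma compact_quot {E : Type*} [NormedAddCommGroup E] [NormedSpace ℝ E] [FiniteDimensional ℝ E]
    {ι : Type*} [Fintype ι] (b : Basis ι ℝ E) :
    CompactSpace (E ⧸ (span ℤ (Set.range b)).toAddSubgroup) := by
  constructor
  have hb : IsCompact (closure (ZSpan.fundamentalDomain b)) :=
    (ZSpan.fundamentalDomain_isBounded b).isCompact_closure
  have hsurj : (Set.univ : Set (E ⧸ (span ℤ (Set.range b)).toAddSubgroup)) =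
      QuotientAddGroup.mk '' (closure (ZSpan.fundamentalDomain b)) := by
    refine Set.eq_of_subset_of_subset (fun x _ => ?_) (Set.subset_univ _)
    induction x using QuotientAddGroup.induction_on with
    | H y =>
      obtain ⟨v, hv, -⟩ := ZSpan.exist_unique_vadd_mem_fundamentalDomain b y
      refine ⟨v +ᵥ y, subset_closure hv, ?_⟩
      rw [QuotientAddGroup.eq]
      have : -((v : E) + y) + y = -(v : E) := by abel
      rw [show v +ᵥ y = (v : E) + y from rfl, this]
      exact neg_mem v.2
  rw [hsurj]
  exact hb.image continuous_quot_mk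

/-- the image on the torus `ℝⁿ/ℤⁿ` of a nonempty `k`-dimensional affine
subspace `V = {x | A·x = b}` of `ℝⁿ` with rational coefficient matrix `A` is
homeomorphic to the `k`-dimensional torus `ℝᵏ/ℤᵏ`. -/
theorem toric_subspace (n m k : ℕ) (hn : 1 ≤ n)
    (A : Matrix (Fin m) (Fin n) ℝ) (hA : ∀ i j, ∃ q : ℚ, A i j = (q : ℝ))
    (b : Fin m → ℝ)
    (hne : {x : Fin n → ℝ | A.mulVec x = b}.Nonempty)
    (hk : Module.finrank ℝ (LinearMap.ker A.mulVecLin) = k) :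
    Nonempty
      ((↥((QuotientAddGroup.mk' (intLattice n)) ''
          {x : Fin n → ℝ | A.mulVec x = b})) ≃ₜ Torus k) := by
  classical
  -- rational matrix
  have hAB : A = (Matrix.of fun i j => (hA i j).choose).map Rat.cast := by
    ext i j; exact (hA i j).choose_spec
  set B : Matrix (Fin m) (Fin n) ℚ := Matrix.of fun i j => (hA i j).choose with hB
  -- the kernel subspace
  set W : Submodule ℝ (Fin n → ℝ) := LinearMap.ker A.mulVecLin with hW
  -- discreteness of the integer lattice
  haveI hdiscZ : DiscreteTopology (intLattice n) := by
    rw [intLattice_eq]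
    exact inferInstanceAs <|
      DiscreteTopology (span ℤ (Set.range (Pi.basisFun ℝ (Fin n)))).toAddSubgroup
  -- the lattice of integer points of W
  set L : Submodule ℤ ↥W :=
    Submodule.comap ((W.subtype).restrictScalars ℤ)
      (AddSubgroup.toIntSubmodule (intLattice n)) with hL
  haveI hdiscL : DiscreteTopology L := by
    refine DiscreteTopology.preimage_of_continuous_injective
      ((intLattice n : Set (Fin n → ℝ))) ?_ (Submodule.injective_subtype W)
    exact continuous_subtype_val
  -- L spans W
  have hspanW : span ℝ ((L : Set ↥W)) = ⊤ := by
    apply Submodule.map_injective_of_injective (Submodule.injective_subtype W)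
    rw [Submodule.map_span, Submodule.map_top, Submodule.range_subtype]
    have himg : (W.subtype '' (L : Set ↥W)) = {y : Fin n → ℝ |
        y ∈ LinearMap.ker (B.map Rat.cast : Matrix (Fin m) (Fin n) ℝ).mulVecLin ∧
        ∀ i, ∃ z : ℤ, y i = (z : ℝ)} := by
      ext y
      constructor
      · rintro ⟨⟨y, hyW⟩, hyL, rfl⟩
        refine ⟨by rwa [← hAB], fun i => ?_⟩
        obtain ⟨z, hz⟩ := (hyL : (y : Fin n → ℝ) ∈ intLattice n) i (Set.mem_univ i)
        exact ⟨z, by simpa using hz.symm⟩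
      · rintro ⟨hyker, hyint⟩
        have hyW : y ∈ W := by rwa [hW, hAB]
        refine ⟨⟨y, hyW⟩, ?_, rfl⟩
        intro i _
        obtain ⟨z, hz⟩ := hyint i
        exact ⟨z, by simpa using hz.symm⟩
    rw [himg, intKer_span B, ← hAB]
  haveI hZL : IsZLattice ℝ L := ⟨hspanW⟩
  -- bases
  haveI : Module.Finite ℤ L := ZLattice.module_finite ℝ L
  haveI : Module.Free ℤ L := ZLattice.module_free ℝ L
  have hrk : finrank ℤ L = k := by rw [ZLattice.rank ℝ L, ← hk]
  have hcard : Fintype.card (Module.Free.ChooseBasisIndex ℤ L) = k := by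
    rw [← Module.finrank_eq_card_chooseBasisIndex, hrk]
  let bL : Basis (Fin k) ℤ L :=
    (Module.Free.chooseBasis ℤ L).reindex (Fintype.equivFinOfCardEq hcard)
  let bE : Basis (Fin k) ℝ ↥W := bL.ofZLatticeBasis ℝ L
  have hspan : span ℤ (Set.range bE) = L := bL.ofZLatticeBasis_span ℝ
  -- homeomorphism with the k-torus
  let f : ↥W ≃ₗ[ℝ] (Fin k → ℝ) := bE.equivFun
  have hf : Continuous f := LinearMap.continuous_of_finiteDimensional f.toLinearMap
  have hf' : Continuous f.symm := LinearMap.continuous_of_finiteDimensional f.symm.toLinearMap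
  have hmap : (L.toAddSubgroup).map f.toAddEquiv.toAddMonoidHom = intLattice k := by
    ext x
    rw [AddSubgroup.mem_map_equiv]
    have h1 : (f.toAddEquiv.symm x ∈ L.toAddSubgroup) ↔ f.symm x ∈ span ℤ (Set.range bE) := by
      rw [hspan]; rfl
    rw [h1, Basis.mem_span_iff_repr_mem]
    have h2 : ∀ i, bE.repr (f.symm x) i = x i := by
      intro i
      have h3 : bE.equivFun (f.symm x) = x := f.apply_symm_apply x
      calc bE.repr (f.symm x) i = bE.equivFun (f.symm x) i := by rw [Basis.equivFun_apply]
        _ = x i := by rw [h3]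
    rw [intLattice_eq, Submodule.mem_toAddSubgroup, Basis.mem_span_iff_repr_mem]
    refine forall_congr' fun i => ?_
    rw [h2 i, Pi.basisFun_repr]
  haveI hcq : CompactSpace (↥W ⧸ L.toAddSubgroup) := by
    have := compact_quot bE
    rwa [hspan] at this
  let homeo1 : (↥W ⧸ L.toAddSubgroup) ≃ₜ Torus k :=
    quotHomeo f.toAddEquiv hf hf' L.toAddSubgroup (intLattice k) hmap
  -- T2 for the big torus
  haveI : IsClosed ((intLattice n : Set (Fin n → ℝ))) := AddSubgroup.isClosed_of_discrete
  haveI : T3Space (Torus n) := QuotientAddGroup.instT3Space _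
  -- descend W → Torus n
  set q : (Fin n → ℝ) →+ Torus n := QuotientAddGroup.mk' (intLattice n) with hq
  set ψ : ↥W →+ Torus n := q.comp (W.subtype.toAddMonoidHom) with hψdef
  have hψ : ∀ x ∈ L.toAddSubgroup, ψ x = 0 := by
    intro x hx
    exact (QuotientAddGroup.eq_zero_iff _).mpr hx
  set F : (↥W ⧸ L.toAddSubgroup) →+ Torus n := QuotientAddGroup.lift L.toAddSubgroup ψ hψ
    with hF
  have hFcont : Continuous F := by
    rw [(QuotientAddGroup.isQuotientMap_mk L.toAddSubgroup).continuous_iff]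
    exact continuous_quot_mk.comp continuous_subtype_val
  have hFinj : Function.Injective F := by
    rw [injective_iff_map_eq_zero]
    intro x hx
    induction x using QuotientAddGroup.induction_on with
    | H y =>
      have h0 : (y : Fin n → ℝ) ∈ intLattice n := by
        rw [hF] at hx
        exact (QuotientAddGroup.eq_zero_iff _).mp hx
      exact (QuotientAddGroup.eq_zero_iff _).mpr h0
  have hFrange : Set.range F = ⇑q '' {x : Fin n → ℝ | A.mulVec x = 0} := by
    have h1 : {x : Fin n → ℝ | A.mulVec x = 0} = (W : Set (Fin n → ℝ)) := by
      ext x; simp [hW, LinearMap.mem_ker, Matrix.mulVecLin_apply]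
    rw [h1]
    ext t
    constructor
    · rintro ⟨x, rfl⟩
      induction x using QuotientAddGroup.induction_on with
      | H y => exact ⟨y, y.2, rfl⟩
    · rintro ⟨y, hy, rfl⟩
      exact ⟨QuotientAddGroup.mk (⟨y, hy⟩ : ↥W), rfl⟩
  -- homeomorphism onto the image
  let e2 : (↥W ⧸ L.toAddSubgroup) ≃ ↥(⇑q '' {x : Fin n → ℝ | A.mulVec x = 0}) :=
    (Equiv.ofInjective F hFinj).trans (Equiv.setCongr hFrange)
  have he2 : Continuous e2 := by
    apply Continuous.subtype_mk
    exact hFcont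
  let homeo2 : (↥W ⧸ L.toAddSubgroup) ≃ₜ ↥(⇑q '' {x : Fin n → ℝ | A.mulVec x = 0}) :=
    he2.homeoOfEquivCompactToT2
  -- translation
  obtain ⟨x₀, hx₀⟩ := hne
  let τ : Torus n ≃ₜ Torus n := Homeomorph.addLeft (q x₀)
  have htau : ∀ t : Torus n, τ t = q x₀ + t := fun t => rfl
  have himg : ⇑τ '' (⇑q '' {x : Fin n → ℝ | A.mulVec x = 0})
      = ⇑q '' {x : Fin n → ℝ | A.mulVec x = b} := by
    ext t
    constructor
    · rintro ⟨-, ⟨y, hy, rfl⟩, rfl⟩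
      refine ⟨x₀ + y, ?_, ?_⟩
      · simp only [Set.mem_setOf_eq] at hy ⊢
        rw [Matrix.mulVec_add, hy, add_zero]
        exact hx₀
      · rw [htau, ← map_add]
    · rintro ⟨z, hz, rfl⟩
      refine ⟨q (z - x₀), ⟨z - x₀, ?_, rfl⟩, ?_⟩
      · simp only [Set.mem_setOf_eq] at hz ⊢
        rw [Matrix.mulVec_sub, hz]
        rw [show A.mulVec x₀ = b from hx₀, sub_self]
      · rw [htau, ← map_add]
        congr 1
        abel
  exact ⟨(((Homeomorph.setCongr himg.symm).trans (τ.image _).symm).trans homeo2.symm).trans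
    homeo1⟩
end
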